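/- arXiv:2007.03937 — 3 statements merged into one kernel-verified Lean document; each statement's English description precedes it below -/
import Mathlib

section
/- Suppose ∫_{B̄_R(x)} |η| dμ < ∞. Then the following are equivalent: (1) x is a Lebesgue point for η with respect to μ along an α-sequence, for some α ∈ (0,1); (2) x is a Lebesgue point for η with respect to μ, i.e. (1/μ(B̄_r(x))) ∫_{B̄_r(x)} |η(x') − η(x)| dμ(x') → 0 as r → 0⁺. -/
open MeasureTheory Filter Topology ENNReal Metric

/-- `M_α(r) = (∫_{B̄_r(x)} |η − η(x)| dμ)^α · (μ(B̄_r(x)))^{1−α}`, computed in `ℝ≥0∞`. -/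
noncomputable def alphaRatioFn {𝒳 : Type*} [MetricSpace 𝒳] [MeasurableSpace 𝒳]
    (μ : MeasureTheory.Measure 𝒳) (η : 𝒳 → ℝ) (x : 𝒳) (α : ℝ) (r : ℝ) : ℝ≥0∞ :=
  (∫⁻ y in Metric.closedBall x r, ENNReal.ofReal |η y - η x| ∂μ) ^ α *
    (μ (Metric.closedBall x r)) ^ (1 - α)

/-- The `α`-sequence `r_m := sup {r > 0 | M_α(r) < 1/m}` for `η` w.r.t. `μ` at `x`. -/
noncomputable def alphaSeq {𝒳 : Type*} [MetricSpace 𝒳] [MeasurableSpace 𝒳]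
    (μ : MeasureTheory.Measure 𝒳) (η : 𝒳 → ℝ) (x : 𝒳) (α : ℝ) (m : ℕ) : ℝ :=
  sSup {r : ℝ | 0 < r ∧ alphaRatioFn μ η x α r < ((m : ℝ≥0∞))⁻¹}

namespace Stmt14Aux

lemma key_ineq {α lr vr ls vs : ℝ} (hα0 : 0 < α) (hα1 : α < 1)
    (hlr : 0 ≤ lr) (hvr : 0 < vr) (hls : 0 ≤ ls) (hvs : 0 < vs) (hvsr : vs ≤ vr)
    (h2 : lr ^ α * vr ^ (1 - α) ≤ 2 * (ls ^ α * vs ^ (1 - α))) :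
    lr / vr ≤ 2 ^ (1 / α) * (ls / vs) := by
  have hid : ∀ l v : ℝ, 0 ≤ l → 0 < v → (l / v) ^ α = l ^ α * v ^ (1 - α) / v := by
    intro l v hl hv
    have hv1 : v ^ α * v ^ (1 - α) = v := by
      rw [← Real.rpow_add hv, add_sub_cancel, Real.rpow_one]
    rw [Real.div_rpow hl hv.le]
    rw [eq_div_iff hv.ne', div_mul_eq_mul_div, div_eq_iff (ne_of_gt (Real.rpow_pos_of_pos hv α))]
    nlinarith [hv1, Real.rpow_pos_of_pos hv α, Real.rpow_pos_of_pos hv (1-α), Real.rpow_nonneg hl α]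
  have h3 : (lr / vr) ^ α ≤ 2 * (ls / vs) ^ α := by
    rw [hid lr vr hlr hvr, hid ls vs hls hvs]
    calc lr ^ α * vr ^ (1 - α) / vr ≤ 2 * (ls ^ α * vs ^ (1 - α)) / vr := by gcongr
      _ ≤ 2 * (ls ^ α * vs ^ (1 - α)) / vs := by
          apply div_le_div_of_nonneg_left _ hvs hvsr
          positivity
      _ = 2 * (ls ^ α * vs ^ (1 - α) / vs) := by ring
  have h4 : lr / vr = ((lr / vr) ^ α) ^ (1 / α) := by
    rw [← Real.rpow_mul (by positivity), mul_one_div, div_self hα0.ne', Real.rpow_one]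
  calc lr / vr = ((lr / vr) ^ α) ^ (1 / α) := h4
    _ ≤ (2 * (ls / vs) ^ α) ^ (1 / α) := Real.rpow_le_rpow (by positivity) h3 (by positivity)
    _ = 2 ^ (1 / α) * (ls / vs) := by
        rw [Real.mul_rpow (by norm_num) (by positivity), ← Real.rpow_mul (by positivity),
          mul_one_div, div_self hα0.ne', Real.rpow_one]

variable {𝒳 : Type*} [MetricSpace 𝒳] [MeasurableSpace 𝒳] [BorelSpace 𝒳]

/-- The set whose supremum defines `alphaSeq`. -/
def Sset (μ : Measure 𝒳) (η : 𝒳 → ℝ) (x : 𝒳) (α : ℝ) (m : ℕ) : Set ℝ :=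
  {r : ℝ | 0 < r ∧ alphaRatioFn μ η x α r < ((m : ℝ≥0∞))⁻¹}

lemma core (μ : Measure 𝒳) (η : 𝒳 → ℝ) (hηmeas : Measurable η)
    (x : 𝒳) (hsupp : ∀ r > (0 : ℝ), 0 < μ (Metric.closedBall x r))
    (R : ℝ) (hR : 0 < R) (hfin : μ (Metric.closedBall x R) < ⊤)
    (hint : IntegrableOn η (Metric.closedBall x R) μ)
    (hatom : μ {x} = 0)
    (hnontriv : ∀ r > (0 : ℝ),
      0 < ∫⁻ y in Metric.closedBall x r, ENNReal.ofReal |η y - η x| ∂μ)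
    (α : ℝ) (hα : α ∈ Set.Ioo (0 : ℝ) 1) :
    (∃ R₁ ∈ Set.Ioo (0 : ℝ) R, alphaRatioFn μ η x α R₁ < alphaRatioFn μ η x α R) ∧
    ((Tendsto
        (fun m : ℕ =>
          (∫ y in Metric.closedBall x (alphaSeq μ η x α m), |η y - η x| ∂μ) /
            (μ (Metric.closedBall x (alphaSeq μ η x α m))).toReal)
        atTop (𝓝 0)) ↔
      Tendsto
        (fun r : ℝ =>
          (∫ y in Metric.closedBall x r, |η y - η x| ∂μ) /
            (μ (Metric.closedBall x r)).toReal)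
        (𝓝[>] 0) (𝓝 0)) := by
  obtain ⟨hα0, hα1⟩ := hα
  set f : 𝒳 → ℝ≥0∞ := fun y => ENNReal.ofReal |η y - η x| with hfdef
  have hf : Measurable f := ((hηmeas.sub measurable_const).abs).ennreal_ofReal
  set ν : Measure 𝒳 := μ.withDensity f with hνdef
  have hLν : ∀ r : ℝ, (∫⁻ y in Metric.closedBall x r, ENNReal.ofReal |η y - η x| ∂μ)
      = ν (Metric.closedBall x r) := fun r =>
    (withDensity_apply f measurableSet_closedBall).symm
  have hMrepr : ∀ r : ℝ, alphaRatioFn μ η x α r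
      = ν (Metric.closedBall x r) ^ α * μ (Metric.closedBall x r) ^ (1 - α) := by
    intro r; rw [alphaRatioFn, hLν]
  -- finiteness of ν on the ball of radius R
  have hνR : ν (Metric.closedBall x R) ≠ ⊤ := by
    rw [← hLν]
    have hgint : IntegrableOn (fun y => |η y - η x|) (Metric.closedBall x R) μ :=
      (hint.sub (integrableOn_const hfin.ne)).abs
    have h2 := hgint.2
    rw [hasFiniteIntegral_iff_ofReal (Eventually.of_forall fun y => abs_nonneg _)] at h2
    exact h2.ne
  have hνx : ν {x} = 0 := by
    rw [hνdef, withDensity_apply f (measurableSet_singleton x),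
      Measure.restrict_eq_zero.2 hatom, lintegral_zero_measure]
  -- basic monotonicity
  have hVmono : ∀ ⦃a b : ℝ⦄, a ≤ b → μ (Metric.closedBall x a) ≤ μ (Metric.closedBall x b) :=
    fun a b hab => measure_mono (closedBall_subset_closedBall hab)
  have hLmono : ∀ ⦃a b : ℝ⦄, a ≤ b → ν (Metric.closedBall x a) ≤ ν (Metric.closedBall x b) :=
    fun a b hab => measure_mono (closedBall_subset_closedBall hab)
  have hMmono : Monotone (alphaRatioFn μ η x α) := by
    intro a b hab
    rw [hMrepr, hMrepr]
    exact mul_le_mul' (ENNReal.rpow_le_rpow (hLmono hab) hα0.le)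
      (ENNReal.rpow_le_rpow (hVmono hab) (by linarith))
  -- finiteness / positivity on (0, R]
  have hVfin : ∀ r : ℝ, r ≤ R → μ (Metric.closedBall x r) ≠ ⊤ :=
    fun r hr => ne_top_of_le_ne_top hfin.ne (hVmono hr)
  have hLfin : ∀ r : ℝ, r ≤ R → ν (Metric.closedBall x r) ≠ ⊤ :=
    fun r hr => ne_top_of_le_ne_top hνR (hLmono hr)
  have hLpos : ∀ r : ℝ, 0 < r → 0 < ν (Metric.closedBall x r) := by
    intro r hr; rw [← hLν]; exact hnontriv r hr
  have hMpos : ∀ r : ℝ, 0 < r → r ≤ R → 0 < alphaRatioFn μ η x α r := by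
    intro r hr hrR
    rw [hMrepr]
    exact mul_pos (ENNReal.rpow_pos (hLpos r hr) (hLfin r hrR)).ne'
      (ENNReal.rpow_pos (hsupp r hr) (hVfin r hrR)).ne'
  have hMfin : ∀ r : ℝ, r ≤ R → alphaRatioFn μ η x α r ≠ ⊤ := by
    intro r hrR
    rw [hMrepr]
    exact ENNReal.mul_ne_top (ENNReal.rpow_ne_top_of_nonneg hα0.le (hLfin r hrR))
      (ENNReal.rpow_ne_top_of_nonneg (by linarith) (hVfin r hrR))
  -- continuity from above
  have htends : ∀ (π : Measure 𝒳), π (Metric.closedBall x R) ≠ ⊤ →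
      ∀ (b : ℝ) (t : ℕ → ℝ), Antitone t → (∀ n, t n ≤ R) → (∀ n, b ≤ t n) →
      Tendsto t atTop (𝓝 b) →
      Tendsto (fun n => π (Metric.closedBall x (t n))) atTop
        (𝓝 (π (Metric.closedBall x b))) := by
    intro π hπ b t ht htR hbt hlim
    have h1 : (⋂ n, Metric.closedBall x (t n)) = Metric.closedBall x b := by
      ext y
      simp only [Set.mem_iInter, Metric.mem_closedBall]
      constructor
      · intro h
        exact ge_of_tendsto hlim (Eventually.of_forall h)
      · intro h n
        exact h.trans (hbt n)
    have h2 := tendsto_measure_iInter_atTop (μ := π)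
      (s := fun n => Metric.closedBall x (t n))
      (fun n => measurableSet_closedBall.nullMeasurableSet)
      (fun a b hab => closedBall_subset_closedBall (ht hab))
      ⟨0, ne_top_of_le_ne_top hπ (measure_mono (closedBall_subset_closedBall (htR 0)))⟩
    rw [h1] at h2
    exact h2
  -- M can be made small
  have hsmall : ∀ ε : ℝ≥0∞, 0 < ε → ∃ r : ℝ, 0 < r ∧ r ≤ R ∧ alphaRatioFn μ η x α r < ε := by
    intro ε hε
    set t : ℕ → ℝ := fun n => R / (n + 1) with htdef
    have ht_anti : Antitone t := by
      intro a b hab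
      apply div_le_div_of_nonneg_left hR.le (by positivity)
      exact_mod_cast by omega
    have htR : ∀ n, t n ≤ R := by
      intro n
      rw [htdef]
      apply div_le_self hR.le
      exact_mod_cast by omega
    have htpos : ∀ n, 0 < t n := fun n => by positivity
    have hlim : Tendsto t atTop (𝓝 0) := by
      apply Tendsto.div_atTop (tendsto_const_nhds (x := R))
      exact tendsto_atTop_add_const_right _ 1 tendsto_natCast_atTop_atTop
    have hb0 : Metric.closedBall x (0:ℝ) = {x} := Metric.closedBall_zero
    have hν0 : Tendsto (fun n => ν (Metric.closedBall x (t n))) atTop (𝓝 0) := by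
      have := htends ν hνR 0 t ht_anti htR (fun n => (htpos n).le) hlim
      rwa [hb0, hνx] at this
    have hμ0 : Tendsto (fun n => μ (Metric.closedBall x (t n))) atTop (𝓝 0) := by
      have := htends μ hfin.ne 0 t ht_anti htR (fun n => (htpos n).le) hlim
      rwa [hb0, hatom] at this
    set c : ℝ≥0∞ := min ε 1 / 2 with hcdef
    have hmin0 : min ε 1 ≠ 0 := (lt_min hε zero_lt_one).ne'
    have hmintop : min ε 1 ≠ ⊤ := ne_top_of_le_ne_top one_ne_top (min_le_right _ _)
    have hc0 : c ≠ 0 := by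
      simp [hcdef, ENNReal.div_eq_zero_iff, hmin0]
    have hctop : c ≠ ⊤ := (ENNReal.div_lt_top hmintop (by norm_num)).ne
    have hcε : c < ε :=
      lt_of_lt_of_le (ENNReal.half_lt_self hmin0 hmintop) (min_le_left _ _)
    have hev : ∀ᶠ n in atTop, ν (Metric.closedBall x (t n)) < c ∧
        μ (Metric.closedBall x (t n)) < c := by
      filter_upwards [hν0.eventually_lt_const (zero_lt_iff.2 hc0),
        hμ0.eventually_lt_const (zero_lt_iff.2 hc0)] with n h1 h2
      exact ⟨h1, h2⟩
    obtain ⟨n, hn⟩ := hev.exists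
    refine ⟨t n, htpos n, htR n, ?_⟩
    have : alphaRatioFn μ η x α (t n) ≤ c := by
      rw [hMrepr]
      calc ν (Metric.closedBall x (t n)) ^ α * μ (Metric.closedBall x (t n)) ^ (1 - α)
          ≤ c ^ α * c ^ (1 - α) :=
            mul_le_mul' (ENNReal.rpow_le_rpow hn.1.le hα0.le)
              (ENNReal.rpow_le_rpow hn.2.le (by linarith))
        _ = c ^ (α + (1 - α)) := (ENNReal.rpow_add α (1-α) hc0 hctop).symm
        _ = c := by norm_num
    exact lt_of_le_of_lt this hcε
  -- the witness R₁
  have hMR : 0 < alphaRatioFn μ η x α R := hMpos R hR le_rfl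
  constructor
  · obtain ⟨r, hr0, hrR, hrM⟩ := hsmall _ hMR
    refine ⟨r, ⟨hr0, ?_⟩, hrM⟩
    rcases lt_or_eq_of_le hrR with h | h
    · exact h
    · exact absurd hrM (by rw [h]; exact lt_irrefl _)
  -- the index m₀
  obtain ⟨n₀, hn₀⟩ := ENNReal.exists_inv_nat_lt hMR.ne'
  set m₀ : ℕ := n₀ + 1 with hm₀def
  have hinv_anti : ∀ {a b : ℕ}, a ≤ b → ((b : ℝ≥0∞))⁻¹ ≤ ((a : ℝ≥0∞))⁻¹ := by
    intro a b hab
    exact ENNReal.inv_le_inv.2 (by exact_mod_cast hab)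
  have hm₀R : ((m₀ : ℝ≥0∞))⁻¹ < alphaRatioFn μ η x α R :=
    lt_of_le_of_lt (hinv_anti (Nat.le_succ n₀)) hn₀
  have hSne : ∀ m : ℕ, (Sset μ η x α m).Nonempty := by
    intro m
    obtain ⟨r, hr0, hrR, hrM⟩ := hsmall ((m : ℝ≥0∞))⁻¹
      (ENNReal.inv_pos.2 (ENNReal.natCast_ne_top m))
    exact ⟨r, hr0, hrM⟩
  have hSsub : ∀ m : ℕ, m₀ ≤ m → Sset μ η x α m ⊆ Set.Ioo 0 R := by
    intro m hm r hr
    refine ⟨hr.1, ?_⟩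
    by_contra hcon
    push_neg at hcon
    have : alphaRatioFn μ η x α r < alphaRatioFn μ η x α r :=
      calc alphaRatioFn μ η x α r < ((m : ℝ≥0∞))⁻¹ := hr.2
        _ ≤ ((m₀ : ℝ≥0∞))⁻¹ := hinv_anti hm
        _ < alphaRatioFn μ η x α R := hm₀R
        _ ≤ alphaRatioFn μ η x α r := hMmono hcon
    exact absurd this (lt_irrefl _)
  have hbdd : ∀ m : ℕ, m₀ ≤ m → BddAbove (Sset μ η x α m) := fun m hm =>
    ⟨R, fun r hr => (hSsub m hm hr).2.le⟩
  have hrpos : ∀ m : ℕ, m₀ ≤ m → 0 < alphaSeq μ η x α m := by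
    intro m hm
    obtain ⟨r, hr⟩ := hSne m
    calc (0:ℝ) < r := hr.1
      _ ≤ alphaSeq μ η x α m := le_csSup (hbdd m hm) hr
  have hseqR : ∀ m : ℕ, m₀ ≤ m → alphaSeq μ η x α m ≤ R := fun m hm =>
    csSup_le (hSne m) fun r hr => (hSsub m hm hr).2.le
  have hmemle : ∀ m : ℕ, m₀ ≤ m → ∀ r ∈ Sset μ η x α m, r ≤ alphaSeq μ η x α m :=
    fun m hm r hr => le_csSup (hbdd m hm) hr
  -- the α-sequence goes to zero
  have hseqlt : ∀ ε : ℝ, 0 < ε → ∃ N : ℕ, ∀ m, N ≤ m → alphaSeq μ η x α m < ε := by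
    intro ε hε
    set ε' : ℝ := min ε R / 2 with hε'def
    have hminpos : 0 < min ε R := lt_min hε hR
    have hε'0 : 0 < ε' := by positivity
    have hε'R : ε' ≤ R :=
      le_trans (div_le_self hminpos.le one_le_two) (min_le_right _ _)
    have hε'ε : ε' < ε := lt_of_lt_of_le (half_lt_self hminpos) (min_le_left _ _)
    obtain ⟨n₁, hn₁⟩ := ENNReal.exists_inv_nat_lt (hMpos ε' hε'0 hε'R).ne'
    refine ⟨max m₀ n₁, fun m hm => ?_⟩
    have hm₀m : m₀ ≤ m := le_trans (le_max_left _ _) hm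
    have hle : alphaSeq μ η x α m ≤ ε' := by
      apply csSup_le (hSne m)
      intro r hr
      by_contra hcon
      push_neg at hcon
      have : alphaRatioFn μ η x α r < alphaRatioFn μ η x α r :=
        calc alphaRatioFn μ η x α r < ((m : ℝ≥0∞))⁻¹ := hr.2
          _ ≤ ((n₁ : ℝ≥0∞))⁻¹ := hinv_anti (le_trans (le_max_right _ _) hm)
          _ < alphaRatioFn μ η x α ε' := hn₁
          _ ≤ alphaRatioFn μ η x α r := hMmono hcon.le
      exact absurd this (lt_irrefl _)
    linarith
  have hseq_nhds : Tendsto (alphaSeq μ η x α) atTop (𝓝 0) := by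
    rw [Metric.tendsto_atTop]
    intro ε hε
    obtain ⟨N, hN⟩ := hseqlt ε hε
    refine ⟨max N m₀, fun m hm => ?_⟩
    rw [Real.dist_eq, sub_zero, abs_of_pos (hrpos m (le_trans (le_max_right _ _) hm))]
    exact hN m (le_trans (le_max_left _ _) hm)
  have hseq0 : Tendsto (alphaSeq μ η x α) atTop (𝓝[>] (0:ℝ)) := by
    rw [tendsto_nhdsWithin_iff]
    exact ⟨hseq_nhds, eventually_atTop.2 ⟨m₀, fun m hm => hrpos m hm⟩⟩
  -- right continuity lower bound at the α-sequence
  have hright : ∀ m : ℕ, m₀ ≤ m →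
      ((m : ℝ≥0∞))⁻¹ ≤ alphaRatioFn μ η x α (alphaSeq μ η x α m) := by
    intro m hm
    set rm := alphaSeq μ η x α m with hrmdef
    have hnotin : ∀ r : ℝ, rm < r → ((m : ℝ≥0∞))⁻¹ ≤ alphaRatioFn μ η x α r := by
      intro r hr
      by_contra hcon
      push_neg at hcon
      have hmem : r ∈ Sset μ η x α m := ⟨lt_trans (hrpos m hm) hr, hcon⟩
      exact absurd (hmemle m hm r hmem) (not_le.2 hr)
    rcases lt_or_eq_of_le (hseqR m hm) with hlt | heq
    · have hRrm : 0 < R - rm := by linarith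
      set t : ℕ → ℝ := fun n => rm + (R - rm) / (n + 1) with htdef
      have htgt : ∀ n, rm < t n := by
        intro n
        have : 0 < (R - rm) / ((n:ℝ) + 1) := by positivity
        simp only [htdef]
        linarith
      have ht_anti : Antitone t := by
        intro a b hab
        simp only [htdef]
        have : (R - rm) / ((b:ℝ)+1) ≤ (R - rm) / ((a:ℝ)+1) := by
          apply div_le_div_of_nonneg_left hRrm.le (by positivity)
          have : (a:ℝ) ≤ b := by exact_mod_cast hab
          linarith
        linarith
      have htR : ∀ n, t n ≤ R := by
        intro n
        simp only [htdef]
        have h1 : (R - rm) / ((n:ℝ)+1) ≤ R - rm := by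
          apply div_le_self hRrm.le
          have : (0:ℝ) ≤ n := Nat.cast_nonneg n
          linarith
        linarith
      have hblim : Tendsto t atTop (𝓝 rm) := by
        have h2 : Tendsto (fun n : ℕ => (R - rm) / ((n:ℝ)+1)) atTop (𝓝 0) :=
          Tendsto.div_atTop tendsto_const_nhds
            (tendsto_atTop_add_const_right _ 1 tendsto_natCast_atTop_atTop)
        have h3 := h2.const_add rm
        simpa using h3
      have hνlim := htends ν hνR rm t ht_anti htR (fun n => (htgt n).le) hblim
      have hμlim := htends μ hfin.ne rm t ht_anti htR (fun n => (htgt n).le) hblim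
      have hMlim : Tendsto (fun n => alphaRatioFn μ η x α (t n)) atTop
          (𝓝 (alphaRatioFn μ η x α rm)) := by
        simp only [hMrepr]
        exact ENNReal.Tendsto.mul
          ((ENNReal.continuous_rpow_const.tendsto _).comp hνlim)
          (Or.inr (ENNReal.rpow_ne_top_of_nonneg (by linarith) (hVfin rm hlt.le)))
          ((ENNReal.continuous_rpow_const.tendsto _).comp hμlim)
          (Or.inr (ENNReal.rpow_ne_top_of_nonneg hα0.le (hLfin rm hlt.le)))
      exact ge_of_tendsto hMlim (Eventually.of_forall fun n => hnotin (t n) (htgt n))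
    · rw [hrmdef, heq]
      exact le_trans (hinv_anti hm) hm₀R.le
  -- Bochner integral vs lintegral
  have hInt : ∀ r : ℝ, (∫ y in Metric.closedBall x r, |η y - η x| ∂μ)
      = (ν (Metric.closedBall x r)).toReal := by
    intro r
    rw [integral_eq_lintegral_of_nonneg_ae (f := fun y => |η y - η x|) (Eventually.of_forall fun y => abs_nonneg _)
      ((hηmeas.sub measurable_const).abs).aestronglyMeasurable, hLν]
  simp only [hInt]
  constructor
  · -- hard direction
    intro h
    rw [Metric.tendsto_nhdsWithin_nhds]
    intro ε hε
    set C : ℝ := 2 ^ (1/α) with hCdef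
    have hC1 : 1 ≤ C := Real.one_le_rpow one_le_two (by positivity)
    have hC0 : 0 < C := lt_of_lt_of_le one_pos hC1
    obtain ⟨N₁, hN₁⟩ := (Metric.tendsto_atTop.1 h) (ε / C) (by positivity)
    set N := max N₁ m₀ with hNdef
    have hNm₀ : m₀ ≤ N := le_max_right _ _
    refine ⟨alphaSeq μ η x α N, hrpos N hNm₀, ?_⟩
    intro r hrmem hrdist
    rw [Real.dist_eq, sub_zero] at hrdist
    have hr0 : 0 < r := hrmem
    have hrN : r < alphaSeq μ η x α N := lt_of_le_of_lt (le_abs_self r) hrdist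
    have hex : ∃ k : ℕ, alphaSeq μ η x α (N + k) < r := by
      obtain ⟨K, hK⟩ := hseqlt r hr0
      exact ⟨K, hK (N + K) (Nat.le_add_left _ _)⟩
    have hk₀spec : alphaSeq μ η x α (N + Nat.find hex) < r := Nat.find_spec hex
    have hk₀ne : Nat.find hex ≠ 0 := by
      intro h0
      rw [h0, Nat.add_zero] at hk₀spec
      exact absurd hk₀spec (not_lt.2 hrN.le)
    obtain ⟨j, hj⟩ := Nat.exists_eq_succ_of_ne_zero hk₀ne
    set m := N + j with hmdef
    have hm₀m : m₀ ≤ m := le_trans hNm₀ (Nat.le_add_right _ _)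
    have hN₁m : N₁ ≤ m := le_trans (le_max_left _ _) (Nat.le_add_right _ _)
    have hrlem : r ≤ alphaSeq μ η x α m :=
      not_lt.1 (Nat.find_min hex (by omega : j < Nat.find hex))
    have hs_lt : alphaSeq μ η x α (m+1) < r := by
      have heq : N + Nat.find hex = m + 1 := by omega
      rwa [heq] at hk₀spec
    set s := alphaSeq μ η x α (m+1) with hsdef
    have hs0 : 0 < s := hrpos (m+1) (by omega)
    have hsR : s ≤ R := hseqR (m+1) (by omega)
    have hrR' : r ≤ R := le_trans hrlem (hseqR m hm₀m)
    have hqnonneg : ∀ u : ℝ,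
        0 ≤ (ν (Metric.closedBall x u)).toReal / (μ (Metric.closedBall x u)).toReal :=
      fun u => div_nonneg ENNReal.toReal_nonneg ENNReal.toReal_nonneg
    rw [Real.dist_eq, sub_zero, abs_of_nonneg (hqnonneg r)]
    rcases eq_or_lt_of_le hrlem with heq | hlt
    · have hqm := hN₁ m hN₁m
      rw [Real.dist_eq, sub_zero, abs_of_nonneg (hqnonneg _)] at hqm
      rw [heq]
      exact lt_of_lt_of_le hqm (div_le_self hε.le hC1)
    · obtain ⟨r', hr'S, hr'gt⟩ := exists_lt_of_lt_csSup (hSne m) hlt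
      have hMr : alphaRatioFn μ η x α r < ((m : ℝ≥0∞))⁻¹ :=
        lt_of_le_of_lt (hMmono hr'gt.le) hr'S.2
      have hMs : (((m+1 : ℕ)) : ℝ≥0∞)⁻¹ ≤ alphaRatioFn μ η x α s := hright (m+1) (by omega)
      have hm1 : 1 ≤ m := le_trans (by omega : 1 ≤ m₀) hm₀m
      have hvr : 0 < (μ (Metric.closedBall x r)).toReal :=
        ENNReal.toReal_pos (hsupp r hr0).ne' (hVfin r hrR')
      have hvs : 0 < (μ (Metric.closedBall x s)).toReal :=
        ENNReal.toReal_pos (hsupp s hs0).ne' (hVfin s hsR)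
      have hvsr : (μ (Metric.closedBall x s)).toReal ≤ (μ (Metric.closedBall x r)).toReal :=
        ENNReal.toReal_mono (hVfin r hrR') (hVmono hs_lt.le)
      have hMtoReal : ∀ u : ℝ, (alphaRatioFn μ η x α u).toReal
          = (ν (Metric.closedBall x u)).toReal ^ α
            * (μ (Metric.closedBall x u)).toReal ^ (1-α) := by
        intro u
        rw [hMrepr, ENNReal.toReal_mul, ENNReal.toReal_rpow, ENNReal.toReal_rpow]
      have a1 : (alphaRatioFn μ η x α r).toReal ≤ ((m:ℝ))⁻¹ := by
        have h4 := ENNReal.toReal_mono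
          (ENNReal.inv_ne_top.2 (Nat.cast_ne_zero.2 (by omega))) hMr.le
        rwa [ENNReal.toReal_inv, ENNReal.toReal_natCast] at h4
      have a2 : (((m:ℝ))+1)⁻¹ ≤ (alphaRatioFn μ η x α s).toReal := by
        have h4 := ENNReal.toReal_mono (hMfin s hsR) hMs
        rw [ENNReal.toReal_inv] at h4
        push_cast at h4
        exact h4
      have a3 : ((m:ℝ))⁻¹ ≤ 2 * (((m:ℝ))+1)⁻¹ := by
        have hm0 : (0:ℝ) < m := by exact_mod_cast (by omega : 0 < m)
        have hm1' : (1:ℝ) ≤ m := by exact_mod_cast hm1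
        rw [inv_eq_one_div, inv_eq_one_div, mul_one_div, div_le_div_iff₀ hm0 (by linarith)]
        linarith
      have h2 : (ν (Metric.closedBall x r)).toReal ^ α
          * (μ (Metric.closedBall x r)).toReal ^ (1-α)
          ≤ 2 * ((ν (Metric.closedBall x s)).toReal ^ α
            * (μ (Metric.closedBall x s)).toReal ^ (1-α)) := by
        rw [← hMtoReal r, ← hMtoReal s]
        calc (alphaRatioFn μ η x α r).toReal ≤ ((m:ℝ))⁻¹ := a1
          _ ≤ 2 * (((m:ℝ))+1)⁻¹ := a3
          _ ≤ 2 * (alphaRatioFn μ η x α s).toReal := by linarith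
      have hkey := key_ineq hα0 hα1 (ENNReal.toReal_nonneg) hvr (ENNReal.toReal_nonneg)
        hvs hvsr h2
      have hqs := hN₁ (m+1) (by omega)
      rw [Real.dist_eq, sub_zero, abs_of_nonneg (hqnonneg _)] at hqs
      calc (ν (Metric.closedBall x r)).toReal / (μ (Metric.closedBall x r)).toReal
          ≤ C * ((ν (Metric.closedBall x s)).toReal / (μ (Metric.closedBall x s)).toReal) :=
            hkey
        _ < C * (ε / C) := by exact (mul_lt_mul_iff_right₀ hC0).2 hqs
        _ = ε := by field_simp
  · intro h
    exact h.comp hseq0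

end Stmt14Aux

/-- **Theorem (sequential characterization of Lebesgue points).**
Setting: `μ` a Borel measure on a metric space, `x` in the support of `μ`,
`μ(B̄_R(x)) < ∞` for some `R > 0`, `η` measurable and integrable on `B̄_R(x)`, with the
non-triviality assumptions `μ {x} = 0` and `∫_{B̄_r(x)} |η − η(x)| dμ > 0` for all
`r > 0`. Then `x` is a Lebesgue point for `η` w.r.t. `μ` along the α-sequence for some
`α ∈ (0,1)` iff `x` is a Lebesgue point for `η` w.r.t. `μ`. -/
theorem stmt_14
    {𝒳 : Type*} [MetricSpace 𝒳] [MeasurableSpace 𝒳] [BorelSpace 𝒳]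
    (μ : Measure 𝒳) (η : 𝒳 → ℝ) (hηmeas : Measurable η)
    (x : 𝒳) (hsupp : ∀ r > (0 : ℝ), 0 < μ (Metric.closedBall x r))
    (R : ℝ) (hR : 0 < R) (hfin : μ (Metric.closedBall x R) < ⊤)
    (hint : IntegrableOn η (Metric.closedBall x R) μ)
    (hatom : μ {x} = 0)
    (hnontriv : ∀ r > (0 : ℝ),
      0 < ∫⁻ y in Metric.closedBall x r, ENNReal.ofReal |η y - η x| ∂μ) :
    (∃ α ∈ Set.Ioo (0 : ℝ) 1,
      (∃ R₁ ∈ Set.Ioo (0 : ℝ) R, alphaRatioFn μ η x α R₁ < alphaRatioFn μ η x α R) ∧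
      Tendsto
        (fun m : ℕ =>
          (∫ y in Metric.closedBall x (alphaSeq μ η x α m), |η y - η x| ∂μ) /
            (μ (Metric.closedBall x (alphaSeq μ η x α m))).toReal)
        atTop (𝓝 0)) ↔
    Tendsto
      (fun r : ℝ =>
        (∫ y in Metric.closedBall x r, |η y - η x| ∂μ) /
          (μ (Metric.closedBall x r)).toReal)
      (𝓝[>] 0) (𝓝 0) := by
  constructor
  · rintro ⟨α, hα, -, h⟩
    exact (Stmt14Aux.core μ η hηmeas x hsupp R hR hfin hint hatom hnontriv α hα).2.mp h
  · intro h
    have hc := Stmt14Aux.core μ η hηmeas x hsupp R hR hfin hint hatom hnontriv (1/2)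
      (by norm_num)
    exact ⟨1/2, by norm_num, hc.1, hc.2.mpr h⟩
end

section
/- Let (ψ_m, Θ_m)_{m∈ℕ} be an ISIMIN, for each m ∈ ℕ let X^x_m be the nearest neighbor of x among X₁, …, X_m according to (ψ_m, Θ_m), and let l ∈ ℝ. Then the following are equivalent: (1) l is the Lebesgue value of η at x with respect to ℙ_X; (2) 𝔼[|η(X^x_m) − l|] → 0 as m → ∞. -/
open MeasureTheory Filter Topology ProbabilityTheory
open scoped ENNReal NNReal

lemma layer_point (a : ℝ≥0∞) :
    volume {t : ℝ | t ∈ Set.Ioi (0:ℝ) ∧ ENNReal.ofReal t < a} = a := by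
  rcases eq_or_ne a ∞ with ha | ha
  · have : {t : ℝ | t ∈ Set.Ioi (0:ℝ) ∧ ENNReal.ofReal t < a} = Set.Ioi 0 := by
      ext t; simp [ha, ENNReal.ofReal_lt_top]
    rw [this]; simp [ha]
  · have : {t : ℝ | t ∈ Set.Ioi (0:ℝ) ∧ ENNReal.ofReal t < a} = Set.Ioo 0 a.toReal := by
      ext t
      simp only [Set.mem_setOf_eq, Set.mem_Ioi, Set.mem_Ioo]
      constructor
      · rintro ⟨ht, hlt⟩
        exact ⟨ht, (ENNReal.ofReal_lt_iff_lt_toReal ht.le ha).mp hlt⟩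
      · rintro ⟨ht, hlt⟩
        exact ⟨ht, (ENNReal.ofReal_lt_iff_lt_toReal ht.le ha).mpr hlt⟩
    rw [this, Real.volume_Ioo, sub_zero, ENNReal.ofReal_toReal ha]

-- pointwise bound for lower sets
lemma lower_set_bound {𝒳 : Type*} [MetricSpace 𝒳] [MeasurableSpace 𝒳] [BorelSpace 𝒳]
    (μ Λ : Measure 𝒳) (x : 𝒳) (δ : ℝ) (ε : ℝ≥0∞) (q : ℝ → ℝ≥0∞)
    (hq : Antitone q)
    (h : ∀ r ∈ Set.Icc (0:ℝ) δ, Λ (Metric.closedBall x r) ≤ ε * μ (Metric.closedBall x r))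
    (a : ℝ≥0∞) :
    Λ (Metric.closedBall x δ ∩ {y | a < q (dist x y)})
      ≤ ε * μ (Metric.closedBall x δ ∩ {y | a < q (dist x y)}) := by
  set U : Set ℝ := {r | a < q r} with hU
  have hlow : ∀ {r r' : ℝ}, r' ≤ r → r ∈ U → r' ∈ U := fun {r r'} hle hr => lt_of_lt_of_le hr (hq hle)
  set V : Set 𝒳 := Metric.closedBall x δ ∩ {y | a < q (dist x y)} with hV
  by_cases hne : (U ∩ Set.Icc 0 δ).Nonempty
  · have hbdd : BddAbove (U ∩ Set.Icc 0 δ) := ⟨δ, fun r hr => hr.2.2⟩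
    set s := sSup (U ∩ Set.Icc 0 δ) with hs
    have hs0 : 0 ≤ s := by
      obtain ⟨u, hu⟩ := hne
      exact le_trans hu.2.1 (le_csSup hbdd hu)
    have hsδ : s ≤ δ := csSup_le hne fun r hr => hr.2.2
    by_cases hsU : s ∈ U
    · have hVb : V = Metric.closedBall x s := by
        ext y
        simp only [hV, Set.mem_inter_iff, Metric.mem_closedBall, Set.mem_setOf_eq, dist_comm y x]
        constructor
        · rintro ⟨h1, h2⟩
          exact le_csSup hbdd ⟨h2, dist_nonneg, h1⟩
        · intro h1
          exact ⟨le_trans h1 hsδ, hlow h1 hsU⟩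
      rw [hVb]
      exact h s ⟨hs0, hsδ⟩
    · have hVb : V = ⋃ n : ℕ, Metric.closedBall x (s - 1/(n+1)) := by
        have h1 : V = {y | dist x y < s} := by
          ext y
          simp only [hV, Set.mem_inter_iff, Metric.mem_closedBall, Set.mem_setOf_eq, dist_comm y x]
          constructor
          · rintro ⟨hyδ, hyU⟩
            have hle : dist x y ≤ s := le_csSup hbdd ⟨hyU, dist_nonneg, hyδ⟩
            rcases lt_or_eq_of_le hle with h' | h'
            · exact h'
            · exact absurd (h' ▸ hyU) hsU
          · intro hlt
            obtain ⟨u, hu, hu'⟩ := exists_lt_of_lt_csSup hne hlt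
            exact ⟨le_trans hlt.le hsδ, hlow hu'.le hu.1⟩
        rw [h1]
        ext y
        simp only [Set.mem_setOf_eq, Set.mem_iUnion, Metric.mem_closedBall, dist_comm y x]
        constructor
        · intro hlt
          obtain ⟨n, hn⟩ := exists_nat_one_div_lt (sub_pos.mpr hlt)
          exact ⟨n, by linarith⟩
        · rintro ⟨n, hn⟩
          have : (0:ℝ) < 1/(n+1) := by positivity
          linarith
      have hmono : Monotone (fun n : ℕ => Metric.closedBall x (s - 1/(n+1))) := by
        intro n m hnm
        apply Metric.closedBall_subset_closedBall
        have h1 : (1:ℝ)/(m+1) ≤ 1/(n+1) := by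
          apply one_div_le_one_div_of_le (by positivity)
          exact_mod_cast by omega
        linarith
      rw [hVb, hmono.measure_iUnion, hmono.measure_iUnion,
        ENNReal.mul_iSup]
      apply iSup_mono
      intro n
      rcases le_or_gt 0 (s - 1/(n+1)) with h0 | h0
      · refine h _ ⟨h0, ?_⟩
        have h1 : (0:ℝ) < 1/(n+1) := by positivity
        linarith
      · rw [Metric.closedBall_eq_empty.mpr h0]
        simp
  · have : V = ∅ := by
      ext y
      simp only [hV, Set.mem_inter_iff, Metric.mem_closedBall, Set.mem_setOf_eq, Set.mem_empty_iff_false,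
        iff_false, not_and, dist_comm y x]
      intro h1 h2
      exact hne ⟨dist x y, h2, dist_nonneg, h1⟩
    rw [this]
    simp


lemma layer_rep {𝒳 : Type*} [MetricSpace 𝒳] [MeasurableSpace 𝒳] [BorelSpace 𝒳]
    (ν : Measure 𝒳) [IsFiniteMeasure ν] (x : 𝒳) (δ : ℝ)
    (q : ℝ → ℝ≥0∞) (hqm : Measurable q) :
    ∫⁻ y in Metric.closedBall x δ, q (dist x y) ∂ν
      = ∫⁻ t in Set.Ioi (0:ℝ),
          ν (Metric.closedBall x δ ∩ {y | ENNReal.ofReal t < q (dist x y)}) ∂volume := by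
  have hd : Measurable fun y : 𝒳 => dist x y := (continuous_const.dist continuous_id).measurable
  have hps : MeasurableSet {p : 𝒳 × ℝ | ENNReal.ofReal p.2 < q (dist x p.1)} :=
    measurableSet_lt (ENNReal.measurable_ofReal.comp measurable_snd)
      (hqm.comp (hd.comp measurable_fst))
  have step1 : ∀ y : 𝒳, q (dist x y)
      = ∫⁻ t in Set.Ioi (0:ℝ), {t : ℝ | ENNReal.ofReal t < q (dist x y)}.indicator 1 t ∂volume := by
    intro y
    have hA : MeasurableSet {t : ℝ | ENNReal.ofReal t < q (dist x y)} :=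
      measurableSet_lt ENNReal.measurable_ofReal measurable_const
    rw [lintegral_indicator hA]
    simp only [Pi.one_apply]
    rw [setLIntegral_one, Measure.restrict_apply hA]
    have hset : {t : ℝ | ENNReal.ofReal t < q (dist x y)} ∩ Set.Ioi 0
        = {t : ℝ | t ∈ Set.Ioi (0:ℝ) ∧ ENNReal.ofReal t < q (dist x y)} := by
      ext t
      simp only [Set.mem_inter_iff, Set.mem_setOf_eq, Set.mem_Ioi]
      tauto
    rw [hset, layer_point]
  have step2 : ∫⁻ y in Metric.closedBall x δ,
      (∫⁻ t in Set.Ioi (0:ℝ), {t : ℝ | ENNReal.ofReal t < q (dist x y)}.indicator 1 t ∂volume) ∂ν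
      = ∫⁻ t in Set.Ioi (0:ℝ),
        (∫⁻ y in Metric.closedBall x δ, {y : 𝒳 | ENNReal.ofReal t < q (dist x y)}.indicator 1 y ∂ν) ∂volume := by
    have hmeas : Measurable (Function.uncurry fun (y : 𝒳) (t : ℝ) =>
        ({t : ℝ | ENNReal.ofReal t < q (dist x y)}.indicator 1 t : ℝ≥0∞)) := by
      have : (Function.uncurry fun (y : 𝒳) (t : ℝ) =>
          ({t : ℝ | ENNReal.ofReal t < q (dist x y)}.indicator 1 t : ℝ≥0∞))
          = {p : 𝒳 × ℝ | ENNReal.ofReal p.2 < q (dist x p.1)}.indicator 1 := by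
        ext ⟨y, t⟩
        simp only [Function.uncurry, Set.indicator]
        by_cases hc : ENNReal.ofReal t < q (dist x y) <;> simp [hc]
      rw [this]
      exact measurable_one.indicator hps
    exact lintegral_lintegral_swap hmeas.aemeasurable
  rw [lintegral_congr step1, step2]
  apply lintegral_congr
  intro t
  have hA : MeasurableSet {y : 𝒳 | ENNReal.ofReal t < q (dist x y)} :=
    measurableSet_lt measurable_const (hqm.comp hd)
  rw [lintegral_indicator hA]
  simp only [Pi.one_apply]
  rw [setLIntegral_one, Measure.restrict_apply hA, Set.inter_comm]

lemma abel_lemma {𝒳 : Type*} [MetricSpace 𝒳] [MeasurableSpace 𝒳] [BorelSpace 𝒳]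
    (μ Λ : Measure 𝒳) [IsFiniteMeasure μ] [IsFiniteMeasure Λ] (x : 𝒳) (δ : ℝ) (ε : ℝ≥0∞)
    (q : ℝ → ℝ≥0∞) (hq : Antitone q) (hqm : Measurable q)
    (h : ∀ r ∈ Set.Icc (0:ℝ) δ, Λ (Metric.closedBall x r) ≤ ε * μ (Metric.closedBall x r)) :
    ∫⁻ y in Metric.closedBall x δ, q (dist x y) ∂Λ
      ≤ ε * ∫⁻ y in Metric.closedBall x δ, q (dist x y) ∂μ := by
  have hd : Measurable fun y : 𝒳 => dist x y := (continuous_const.dist continuous_id).measurable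
  rw [layer_rep Λ x δ q hqm, layer_rep μ x δ q hqm]
  have hg : Measurable fun t : ℝ =>
      μ (Metric.closedBall x δ ∩ {y | ENNReal.ofReal t < q (dist x y)}) := by
    have hps : MeasurableSet {p : ℝ × 𝒳 | ENNReal.ofReal p.1 < q (dist x p.2)} :=
      measurableSet_lt (ENNReal.measurable_ofReal.comp measurable_fst)
        (hqm.comp (hd.comp measurable_snd))
    have h2 := measurable_measure_prodMk_left (ν := μ.restrict (Metric.closedBall x δ)) hps
    have h3 : ∀ t : ℝ, (μ.restrict (Metric.closedBall x δ))
        (Prod.mk t ⁻¹' {p : ℝ × 𝒳 | ENNReal.ofReal p.1 < q (dist x p.2)})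
        = μ (Metric.closedBall x δ ∩ {y | ENNReal.ofReal t < q (dist x y)}) := by
      intro t
      have hA : MeasurableSet {y : 𝒳 | ENNReal.ofReal t < q (dist x y)} :=
        measurableSet_lt measurable_const (hqm.comp hd)
      rw [show Prod.mk t ⁻¹' {p : ℝ × 𝒳 | ENNReal.ofReal p.1 < q (dist x p.2)}
          = {y : 𝒳 | ENNReal.ofReal t < q (dist x y)} from rfl,
        Measure.restrict_apply hA, Set.inter_comm]
    simpa only [h3] using h2
  rw [← lintegral_const_mul ε hg]
  apply lintegral_mono_ae
  filter_upwards with t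
  exact lower_set_bound μ Λ x δ ε q hq h (ENNReal.ofReal t)

lemma prob_iInter_pow {Ω 𝒳 : Type*} {mΩ : MeasurableSpace Ω} [m𝒳 : MeasurableSpace 𝒳]
    (P : Measure Ω) [IsProbabilityMeasure P] (X : ℕ → Ω → 𝒳) (μ : Measure 𝒳)
    (hXmeas : ∀ i, Measurable (X i))
    (hXindep : iIndepFun (m := fun _ => m𝒳) X P)
    (hXdist : ∀ i, P.map (X i) = μ)
    (S : Finset ℕ) {A : Set 𝒳} (hA : MeasurableSet A) :
    P (⋂ i ∈ S, X i ⁻¹' A) = μ A ^ S.card := by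
  rw [hXindep.measure_inter_preimage_eq_mul S (sets := fun _ => A) (fun i _ => hA)]
  have h1 : ∀ i ∈ S, P (X i ⁻¹' A) = μ A := fun i _ => by
    rw [← hXdist i, Measure.map_apply (hXmeas i) hA]
  rw [Finset.prod_congr rfl h1, Finset.prod_const]

lemma triple_fubini {Ω α β Z : Type*} {mΩ : MeasurableSpace Ω} [MeasurableSpace α]
    [MeasurableSpace β] [MeasurableSpace Z]
    (P : Measure Ω) [IsProbabilityMeasure P]
    {U : Ω → α} {V : Ω → β} {θ : Ω → Z}
    (hU : Measurable U) (hV : Measurable V) (hθ : Measurable θ)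
    (h1 : IndepFun (fun ω => (U ω, V ω)) θ P)
    (h2 : IndepFun U V P)
    (g : α × (β × Z) → ℝ≥0∞) (hg : Measurable g) :
    ∫⁻ ω, g (U ω, (V ω, θ ω)) ∂P
      = ∫⁻ a, ∫⁻ w, g (a, w) ∂((P.map V).prod (P.map θ)) ∂(P.map U) := by
  haveI : IsProbabilityMeasure (P.map U) := Measure.isProbabilityMeasure_map hU.aemeasurable
  haveI : IsProbabilityMeasure (P.map V) := Measure.isProbabilityMeasure_map hV.aemeasurable
  haveI : IsProbabilityMeasure (P.map θ) := Measure.isProbabilityMeasure_map hθ.aemeasurable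
  have hmap1 : P.map (fun ω => ((U ω, V ω), θ ω)) = (P.map fun ω => (U ω, V ω)).prod (P.map θ) :=
    (indepFun_iff_map_prod_eq_prod_map_map (hU.prodMk hV).aemeasurable hθ.aemeasurable).mp h1
  have hmap2 : P.map (fun ω => (U ω, V ω)) = (P.map U).prod (P.map V) :=
    (indepFun_iff_map_prod_eq_prod_map_map hU.aemeasurable hV.aemeasurable).mp h2
  have hgm : Measurable fun p : (α × β) × Z => g (p.1.1, (p.1.2, p.2)) :=
    hg.comp ((measurable_fst.comp measurable_fst).prodMk
      ((measurable_snd.comp measurable_fst).prodMk measurable_snd))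
  have hpairm : Measurable fun ω => ((U ω, V ω), θ ω) := (hU.prodMk hV).prodMk hθ
  have l1 : ∫⁻ ω, g (U ω, (V ω, θ ω)) ∂P
      = ∫⁻ p : (α × β) × Z, g (p.1.1, (p.1.2, p.2)) ∂(((P.map U).prod (P.map V)).prod (P.map θ)) := by
    rw [← hmap2, ← hmap1, lintegral_map hgm hpairm]
  rw [l1, lintegral_prod _ hgm.aemeasurable]
  have hgm2 : Measurable fun ab : α × β => ∫⁻ z, g (ab.1, (ab.2, z)) ∂(P.map θ) := by
    exact Measurable.lintegral_prod_right (f := fun (ab : α × β) (z : Z) => g (ab.1, (ab.2, z))) hgm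
  rw [lintegral_prod _ hgm2.aemeasurable]
  apply lintegral_congr
  intro a
  exact (lintegral_prod (fun w : β × Z => g (a, w))
    ((hg.comp measurable_prodMk_left).aemeasurable)).symm

lemma master_identity {𝒳 Ω : Type*} [MetricSpace 𝒳] [m𝒳 : MeasurableSpace 𝒳] [BorelSpace 𝒳]
    {mΩ : MeasurableSpace Ω} (P : Measure Ω) [IsProbabilityMeasure P]
    (X : ℕ → Ω → 𝒳) (μ : Measure 𝒳)
    (hXmeas : ∀ i, Measurable (X i))
    (hXindep : iIndepFun (m := fun _ => m𝒳) X P)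
    (hXdist : ∀ i, P.map (X i) = μ)
    (x : 𝒳)
    {Z : Type*} [MeasurableSpace Z] {θ : Ω → Z} (hθmeas : Measurable θ)
    {m : ℕ} (hm : 1 ≤ m)
    (hθindep : IndepFun θ (fun ω => fun i : Fin m => X (i : ℕ) ω) P)
    {ψm : (ℕ → ℝ) × Z → ℕ} (hψmeas : Measurable ψm)
    (hψdep : ∀ (f g : ℕ → ℝ) (z : Z), (∀ i < m, f i = g i) → ψm (f, z) = ψm (g, z))
    (hψmin : ∀ (f : ℕ → ℝ) (z : Z), (∀ i, 0 ≤ f i) →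
      ψm (f, z) < m ∧ ∀ j < m, f (ψm (f, z)) ≤ f j) :
    ∃ Q : ℝ → ℝ≥0∞, Measurable Q ∧
      (∀ r : ℝ, 0 ≤ r → (m : ℝ≥0∞) * μ {y | r < dist x y} ^ (m - 1) ≤ Q r ∧
        Q r ≤ (m : ℝ≥0∞) * μ {y | r ≤ dist x y} ^ (m - 1)) ∧
      (∀ f : 𝒳 → ℝ≥0∞, Measurable f →
        ∫⁻ ω, f (X (ψm (fun i => dist x (X i ω), θ ω)) ω) ∂P
          = ∫⁻ y, f y * Q (dist x y) ∂μ) := by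
  classical
  haveI : IsProbabilityMeasure μ := by
    rw [← hXdist 0]; exact Measure.isProbabilityMeasure_map (hXmeas 0).aemeasurable
  have hdm : Measurable fun y : 𝒳 => dist x y := (continuous_const.dist continuous_id).measurable
  -- the tuple of the first m variables
  set XT : Ω → (Fin m → 𝒳) := fun ω i => X (i : ℕ) ω with hXT
  have hXTmeas : Measurable XT := measurable_pi_lambda _ fun i => hXmeas i
  -- dummied vectors
  set V : ℕ → Ω → (Fin m → 𝒳) := fun k ω i => if (i : ℕ) = k then x else X (i : ℕ) ω with hV
  have hVmeas : ∀ k, Measurable (V k) := by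
    intro k
    apply measurable_pi_lambda
    intro i
    by_cases h : (i : ℕ) = k
    · simp only [hV, h, if_pos]; exact measurable_const
    · simp only [hV, h, if_neg, not_false_iff]; exact hXmeas _
  -- selectors
  set Sel : ℕ → ℝ × ((Fin m → 𝒳) × Z) → ℕ := fun k p =>
    ψm ((fun i => if h : i < m then (if i = k then p.1 else dist x (p.2.1 ⟨i, h⟩)) else 0),
      p.2.2) with hSel
  have hSelmeas : ∀ k, Measurable (Sel k) := by
    intro k
    apply hψmeas.comp
    apply Measurable.prodMk
    · apply measurable_pi_lambda
      intro i
      by_cases h : i < m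
      · by_cases hik : i = k
        · simp only [dif_pos h, if_pos hik]; exact measurable_fst
        · simp only [dif_pos h, if_neg hik]
          exact hdm.comp ((measurable_pi_apply _).comp (measurable_fst.comp measurable_snd))
      · simp only [dif_neg h]; exact measurable_const
    · exact measurable_snd.comp measurable_snd
  -- measures
  set Pθ : Measure Z := P.map θ with hPθ
  haveI : IsProbabilityMeasure Pθ := Measure.isProbabilityMeasure_map hθmeas.aemeasurable
  set PV : ℕ → Measure (Fin m → 𝒳) := fun k => P.map (V k) with hPV
  have hPVprob : ∀ k, IsProbabilityMeasure (PV k) := fun k =>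
    Measure.isProbabilityMeasure_map (hVmeas k).aemeasurable
  set ν : ℕ → Measure ((Fin m → 𝒳) × Z) := fun k => (PV k).prod Pθ with hν
  have hνprob : ∀ k, IsProbabilityMeasure (ν k) := fun k => by
    haveI := hPVprob k; rw [hν]; infer_instance
  -- independence facts
  have hindep1 : ∀ k, k < m → IndepFun (fun ω => (X k ω, V k ω)) θ P := by
    intro k hk
    have hmap : Measurable fun v : Fin m → 𝒳 =>
        (v ⟨k, hk⟩, fun i : Fin m => if (i : ℕ) = k then x else v i) := by
      apply Measurable.prodMk (measurable_pi_apply _)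
      apply measurable_pi_lambda
      intro i
      by_cases h : (i : ℕ) = k
      · simp only [h, if_pos]; exact measurable_const
      · simp only [h, if_neg, not_false_iff]; exact measurable_pi_apply i
    have heq : (fun ω => (X k ω, V k ω))
        = (fun v : Fin m → 𝒳 =>
            (v ⟨k, hk⟩, fun i : Fin m => if (i : ℕ) = k then x else v i)) ∘ XT := rfl
    rw [heq]
    exact hθindep.symm.comp hmap measurable_id
  have hindep2 : ∀ k, IndepFun (X k) (V k) P := by
    intro k
    have hdisj : Disjoint ({k} : Finset ℕ) ((Finset.range m).erase k) := by simp
    have hbase := hXindep.indepFun_finset {k} ((Finset.range m).erase k) hdisj hXmeas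
    have hkmem : k ∈ ({k} : Finset ℕ) := Finset.mem_singleton_self k
    set τ : (((Finset.range m).erase k : Finset ℕ) → 𝒳) → (Fin m → 𝒳) :=
      fun u i => if h : (i : ℕ) ∈ (Finset.range m).erase k then u ⟨(i : ℕ), h⟩ else x with hτ
    have hτmeas : Measurable τ := by
      apply measurable_pi_lambda
      intro i
      by_cases h : (i : ℕ) ∈ (Finset.range m).erase k
      · simp only [hτ, dif_pos h]; exact measurable_pi_apply _
      · simp only [hτ, dif_neg h]; exact measurable_const
    have hev : Measurable fun u : (({k} : Finset ℕ) : Finset ℕ) → 𝒳 => u ⟨k, hkmem⟩ :=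
      measurable_pi_apply _
    have := hbase.comp hev hτmeas
    have heq1 : (fun u : (({k} : Finset ℕ) : Finset ℕ) → 𝒳 => u ⟨k, hkmem⟩)
        ∘ (fun a (i : ({k} : Finset ℕ)) => X (i : ℕ) a) = X k := rfl
    have heq2 : τ ∘ (fun a (i : ((Finset.range m).erase k : Finset ℕ)) => X (i : ℕ) a) = V k := by
      funext a
      funext i
      by_cases h : (i : ℕ) = k
      · simp [hτ, hV, h, Finset.notMem_erase]
      · have hmem : (i : ℕ) ∈ (Finset.range m).erase k := by
          simp [Finset.mem_erase, h, Finset.mem_range, i.2]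
        simp only [Function.comp_apply, hτ, dif_pos hmem, hV, h, if_neg, not_false_iff]
    rw [heq1, heq2] at this
    exact this
  -- the key Fubini identity
  have key : ∀ k, k < m → ∀ g : 𝒳 × ((Fin m → 𝒳) × Z) → ℝ≥0∞, Measurable g →
      ∫⁻ ω, g (X k ω, (V k ω, θ ω)) ∂P = ∫⁻ y, ∫⁻ w, g (y, w) ∂(ν k) ∂μ := by
    intro k hk g hg
    have := triple_fubini P (hXmeas k) (hVmeas k) hθmeas (hindep1 k hk) (hindep2 k) g hg
    rw [this, hXdist k]
  -- the one-dimensional kernels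
  set q : ℕ → ℝ → ℝ≥0∞ := fun k r => ν k {w | Sel k (r, w) = k} with hq
  set Q : ℝ → ℝ≥0∞ := fun r => ∑ k ∈ Finset.range m, q k r with hQ
  have hSelSet : ∀ k, MeasurableSet {p : ℝ × ((Fin m → 𝒳) × Z) | Sel k p = k} := fun k =>
    (hSelmeas k) (measurableSet_singleton k)
  have hqmeas : ∀ k, Measurable (q k) := by
    intro k
    haveI := hPVprob k
    have h2 := measurable_measure_prodMk_left
      (ν := ν k) (hSelSet k)
    exact h2
  have hindep3 : ∀ k, IndepFun (V k) θ P := by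
    intro k
    have hmapV : Measurable fun v : Fin m → 𝒳 => fun i : Fin m => if (i : ℕ) = k then x else v i := by
      apply measurable_pi_lambda
      intro i
      by_cases h : (i : ℕ) = k
      · simp only [h, if_pos]; exact measurable_const
      · simp only [h, if_neg, not_false_iff]; exact measurable_pi_apply i
    have heq : V k = (fun v : Fin m → 𝒳 => fun i : Fin m => if (i : ℕ) = k then x else v i) ∘ XT := rfl
    rw [heq]
    exact hθindep.symm.comp hmapV measurable_id
  have hmap3 : ∀ k, ν k = P.map (fun ω => (V k ω, θ ω)) := by
    intro k
    rw [hν]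
    exact ((indepFun_iff_map_prod_eq_prod_map_map (hVmeas k).aemeasurable
      hθmeas.aemeasurable).mp (hindep3 k)).symm
  have hsetLT : ∀ r : ℝ, MeasurableSet {y : 𝒳 | r < dist x y} := fun r =>
    measurableSet_lt measurable_const hdm
  have hsetLE : ∀ r : ℝ, MeasurableSet {y : 𝒳 | r ≤ dist x y} := fun r =>
    measurableSet_le measurable_const hdm
  -- evaluation of the "all others far" events
  have hEcompute : ∀ (k : ℕ), k < m → ∀ (r : ℝ) (T : Set 𝒳), MeasurableSet T →
      ν k {w : (Fin m → 𝒳) × Z | ∀ i : Fin m, (i : ℕ) ≠ k → w.1 i ∈ T}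
        = μ T ^ (m - 1) := by
    intro k hk r T hT
    have hEmeas : MeasurableSet {w : (Fin m → 𝒳) × Z | ∀ i : Fin m, (i : ℕ) ≠ k → w.1 i ∈ T} := by
      rw [Set.setOf_forall]
      apply MeasurableSet.iInter
      intro i
      by_cases h : (i : ℕ) = k
      · have : {w : (Fin m → 𝒳) × Z | (i : ℕ) ≠ k → w.1 i ∈ T} = Set.univ := by
          ext w; simp [h]
        rw [this]; exact MeasurableSet.univ
      · have : {w : (Fin m → 𝒳) × Z | (i : ℕ) ≠ k → w.1 i ∈ T} = {w | w.1 i ∈ T} := by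
          ext w; simp [h]
        rw [this]
        exact ((measurable_pi_apply i).comp measurable_fst) hT
    rw [hmap3 k, Measure.map_apply ((hVmeas k).prodMk hθmeas) hEmeas]
    have hpre : (fun ω => (V k ω, θ ω)) ⁻¹' {w : (Fin m → 𝒳) × Z | ∀ i : Fin m, (i : ℕ) ≠ k → w.1 i ∈ T}
        = ⋂ i ∈ (Finset.range m).erase k, X i ⁻¹' T := by
      ext ω
      simp only [Set.mem_preimage, Set.mem_setOf_eq, Set.mem_iInter, Finset.mem_erase,
        Finset.mem_range]
      constructor
      · rintro h i ⟨hik, him⟩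
        have h2 := h ⟨i, him⟩ hik
        simpa [hV, hik] using h2
      · intro h i hik
        have h2 := h (i : ℕ) ⟨hik, i.2⟩
        show V k ω i ∈ T
        rw [hV]
        simp only [if_neg hik]
        exact h2
    rw [hpre, prob_iInter_pow P X μ hXmeas hXindep hXdist _ hT,
      Finset.card_erase_of_mem (Finset.mem_range.mpr hk), Finset.card_range]
  refine ⟨Q, Finset.measurable_sum _ (fun k _ => hqmeas k), ?_, ?_⟩
  · -- sandwich bounds
    intro r hr
    constructor
    · have hterm : ∀ k ∈ Finset.range m, μ {y | r < dist x y} ^ (m - 1) ≤ q k r := by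
        intro k hkr
        have hk : k < m := Finset.mem_range.mp hkr
        have hsub : {w : (Fin m → 𝒳) × Z | ∀ i : Fin m, (i : ℕ) ≠ k → w.1 i ∈ {y | r < dist x y}}
            ⊆ {w | Sel k (r, w) = k} := by
          intro w hw
          set g : ℕ → ℝ := fun i => if h : i < m then (if i = k then r else dist x (w.1 ⟨i, h⟩)) else 0 with hg
          have h0 : ∀ i, 0 ≤ g i := by
            intro i
            rw [hg]
            by_cases h : i < m
            · by_cases hik : i = k
              · simp only [dif_pos h, if_pos hik]; exact hr
              · simp only [dif_pos h, if_neg hik]; exact dist_nonneg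
            · simp only [dif_neg h]; exact le_refl 0
          obtain ⟨hlt, hmin⟩ := hψmin g w.2 h0
          show Sel k (r, w) = k
          by_contra hne
          have hSelg : Sel k (r, w) = ψm (g, w.2) := rfl
          have hne' : ψm (g, w.2) ≠ k := fun hc => hne (hSelg.trans hc)
          have h1 : g (ψm (g, w.2)) ≤ g k := hmin k hk
          have h2 : g k = r := by rw [hg]; simp [dif_pos hk]
          have h3 : r < g (ψm (g, w.2)) := by
            have hco : ((⟨ψm (g, w.2), hlt⟩ : Fin m) : ℕ) ≠ k := hne'
            have h4 := hw _ hco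
            show r < (if h : ψm (g, w.2) < m then (if ψm (g, w.2) = k then r else dist x (w.1 ⟨ψm (g, w.2), h⟩)) else 0)
            simp only [dif_pos hlt, if_neg hne']
            exact h4
          rw [h2] at h1
          exact absurd (lt_of_lt_of_le h3 h1) (lt_irrefl r)
        calc μ {y | r < dist x y} ^ (m - 1)
            = ν k {w : (Fin m → 𝒳) × Z | ∀ i : Fin m, (i : ℕ) ≠ k → w.1 i ∈ {y | r < dist x y}} :=
              (hEcompute k hk r _ (hsetLT r)).symm
          _ ≤ q k r := measure_mono hsub
      calc (m : ℝ≥0∞) * μ {y | r < dist x y} ^ (m - 1)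
          = ∑ _k ∈ Finset.range m, μ {y | r < dist x y} ^ (m - 1) := by
            rw [Finset.sum_const, Finset.card_range, nsmul_eq_mul]
        _ ≤ Q r := Finset.sum_le_sum hterm
    · have hterm : ∀ k ∈ Finset.range m, q k r ≤ μ {y | r ≤ dist x y} ^ (m - 1) := by
        intro k hkr
        have hk : k < m := Finset.mem_range.mp hkr
        have hsub : {w : (Fin m → 𝒳) × Z | Sel k (r, w) = k}
            ⊆ {w | ∀ i : Fin m, (i : ℕ) ≠ k → w.1 i ∈ {y | r ≤ dist x y}} := by
          intro w hw
          set g : ℕ → ℝ := fun i => if h : i < m then (if i = k then r else dist x (w.1 ⟨i, h⟩)) else 0 with hg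
          have h0 : ∀ i, 0 ≤ g i := by
            intro i
            rw [hg]
            by_cases h : i < m
            · by_cases hik : i = k
              · simp only [dif_pos h, if_pos hik]; exact hr
              · simp only [dif_pos h, if_neg hik]; exact dist_nonneg
            · simp only [dif_neg h]; exact le_refl 0
          obtain ⟨hlt, hmin⟩ := hψmin g w.2 h0
          have hSelg : ψm (g, w.2) = k := hw
          intro i hik
          have h1 : g (ψm (g, w.2)) ≤ g (i : ℕ) := hmin (i : ℕ) i.2
          rw [hSelg] at h1
          have h2 : g k = r := by rw [hg]; simp [dif_pos hk]
          have h3 : g (i : ℕ) = dist x (w.1 i) := by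
            rw [hg]
            simp only [dif_pos i.2, if_neg hik]
          rw [h2, h3] at h1
          exact h1
        calc q k r ≤ ν k {w : (Fin m → 𝒳) × Z | ∀ i : Fin m, (i : ℕ) ≠ k → w.1 i ∈ {y | r ≤ dist x y}} :=
              measure_mono hsub
          _ = μ {y | r ≤ dist x y} ^ (m - 1) := hEcompute k hk r _ (hsetLE r)
      calc Q r ≤ ∑ _k ∈ Finset.range m, μ {y | r ≤ dist x y} ^ (m - 1) := Finset.sum_le_sum hterm
        _ = (m : ℝ≥0∞) * μ {y | r ≤ dist x y} ^ (m - 1) := by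
            rw [Finset.sum_const, Finset.card_range, nsmul_eq_mul]
  · -- the identity
    intro f hf
    set idx : Ω → ℕ := fun ω => ψm (fun i => dist x (X i ω), θ ω) with hidx
    have hidxlt : ∀ ω, idx ω < m := fun ω =>
      (hψmin (fun i => dist x (X i ω)) (θ ω) (fun i => dist_nonneg)).1
    have hidxmeas : Measurable idx := by
      apply hψmeas.comp
      apply Measurable.prodMk
      · exact measurable_pi_lambda _ fun i => hdm.comp (hXmeas i)
      · exact hθmeas
    have hrep : ∀ ω, f (X (idx ω) ω) = ∑ k ∈ Finset.range m, (if idx ω = k then f (X k ω) else 0) := by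
      intro ω
      rw [Finset.sum_ite_eq (Finset.range m) (idx ω) (fun k => f (X k ω))]
      simp [Finset.mem_range.mpr (hidxlt ω)]
    have hsummeas : ∀ k ∈ Finset.range m, Measurable fun ω => (if idx ω = k then f (X k ω) else 0 : ℝ≥0∞) := by
      intro k _
      exact Measurable.ite (hidxmeas (measurableSet_singleton k)) (hf.comp (hXmeas k)) measurable_const
    calc ∫⁻ ω, f (X (idx ω) ω) ∂P
        = ∫⁻ ω, ∑ k ∈ Finset.range m, (if idx ω = k then f (X k ω) else 0) ∂P :=
          lintegral_congr hrep
      _ = ∑ k ∈ Finset.range m, ∫⁻ ω, (if idx ω = k then f (X k ω) else 0) ∂P :=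
          lintegral_finset_sum _ hsummeas
      _ = ∑ k ∈ Finset.range m, ∫⁻ y, f y * q k (dist x y) ∂μ := by
          apply Finset.sum_congr rfl
          intro k hkr
          have hk : k < m := Finset.mem_range.mp hkr
          have hsel_eq : ∀ ω, idx ω = Sel k (dist x (X k ω), (V k ω, θ ω)) := by
            intro ω
            show ψm (fun i => dist x (X i ω), θ ω) = ψm (_, θ ω)
            apply hψdep
            intro i hi
            simp only [dif_pos hi]
            by_cases hik : i = k
            · rw [if_pos hik, hik]
            · rw [if_neg hik]
              have : V k ω ⟨i, hi⟩ = X i ω := by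
                rw [hV]; simp only [if_neg hik]
              rw [this]
          have hgmeas : Measurable (fun p : 𝒳 × ((Fin m → 𝒳) × Z) =>
              (if Sel k (dist x p.1, p.2) = k then f p.1 else 0 : ℝ≥0∞)) := by
            apply Measurable.ite
            · exact ((hSelmeas k).comp ((hdm.comp measurable_fst).prodMk measurable_snd))
                (measurableSet_singleton k)
            · exact hf.comp measurable_fst
            · exact measurable_const
          calc ∫⁻ ω, (if idx ω = k then f (X k ω) else 0) ∂P
              = ∫⁻ ω, (fun p : 𝒳 × ((Fin m → 𝒳) × Z) =>
                  (if Sel k (dist x p.1, p.2) = k then f p.1 else 0 : ℝ≥0∞)) (X k ω, (V k ω, θ ω)) ∂P := by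
                apply lintegral_congr
                intro ω
                simp only
                rw [← hsel_eq ω]
            _ = ∫⁻ y, ∫⁻ w, (if Sel k (dist x y, w) = k then f y else 0 : ℝ≥0∞) ∂(ν k) ∂μ :=
                key k hk _ hgmeas
            _ = ∫⁻ y, f y * q k (dist x y) ∂μ := by
                apply lintegral_congr
                intro y
                calc ∫⁻ w, (if Sel k (dist x y, w) = k then f y else 0 : ℝ≥0∞) ∂(ν k)
                    = ∫⁻ w, Set.indicator {w : (Fin m → 𝒳) × Z | Sel k (dist x y, w) = k}
                        (fun _ => f y) w ∂(ν k) := by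
                      apply lintegral_congr
                      intro w
                      by_cases hc : Sel k (dist x y, w) = k
                      · simp [Set.indicator, hc]
                      · simp [Set.indicator, hc]
                  _ = ∫⁻ _w in {w : (Fin m → 𝒳) × Z | Sel k (dist x y, w) = k}, f y ∂(ν k) :=
                      lintegral_indicator (measurable_prodMk_left (hSelSet k)) _
                  _ = f y * q k (dist x y) := setLIntegral_const _ _
      _ = ∫⁻ y, f y * Q (dist x y) ∂μ := by
          rw [← lintegral_finset_sum]
          · apply lintegral_congr
            intro y
            rw [hQ, Finset.mul_sum]
          · intro k _
            exact (hf.mul ((hqmeas k).comp hdm))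


lemma tendsto_shrinking_balls {𝒳 : Type*} [MetricSpace 𝒳] [MeasurableSpace 𝒳] [BorelSpace 𝒳]
    (ν : Measure 𝒳) [IsFiniteMeasure ν] (x : 𝒳) (c : ℝ) (hc : 0 < c) :
    Tendsto (fun n : ℕ => ν (Metric.closedBall x (c / (n + 1)))) atTop
      (𝓝 (ν (Metric.closedBall x 0))) := by
  have hrad : Tendsto (fun n : ℕ => c / (n + 1)) atTop (𝓝 0) := by
    have := tendsto_one_div_add_atTop_nhds_zero_nat.const_mul c
    simpa [div_eq_mul_inv, mul_comm] using this
  have hset : ⋂ n : ℕ, Metric.closedBall x (c / (n + 1)) = Metric.closedBall x 0 := by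
    ext y
    simp only [Set.mem_iInter, Metric.mem_closedBall]
    constructor
    · intro h
      exact ge_of_tendsto' hrad fun n => h n
    · intro h n
      have : (0:ℝ) ≤ c / (n + 1) := by positivity
      linarith
  have hanti : Antitone fun n : ℕ => Metric.closedBall x (c / (n + 1)) := by
    intro n k hnk
    apply Metric.closedBall_subset_closedBall
    apply div_le_div_of_nonneg_left hc.le (by positivity)
    exact_mod_cast by omega
  have := MeasureTheory.tendsto_measure_iInter_atTop
    (fun n => (Metric.isClosed_closedBall.measurableSet).nullMeasurableSet) hanti
    ⟨0, measure_ne_top ν _⟩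
  rw [hset] at this
  exact this

lemma tendsto_mul_pow_zero {t : ℝ} (h0 : 0 ≤ t) (h1 : t < 1) :
    Tendsto (fun m : ℕ => (m : ℝ) * t ^ (m - 1)) atTop (𝓝 0) := by
  have h2 : Tendsto (fun k : ℕ => (k : ℝ) * t ^ k) atTop (𝓝 0) := by
    have := (summable_pow_mul_geometric_of_norm_lt_one 1
      (by rwa [Real.norm_eq_abs, abs_of_nonneg h0] : ‖t‖ < 1)).tendsto_atTop_zero
    simpa using this
  have h3 : Tendsto (fun k : ℕ => t ^ k) atTop (𝓝 0) :=
    tendsto_pow_atTop_nhds_zero_of_lt_one h0 h1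
  have hg : Tendsto (fun k : ℕ => ((k : ℝ) + 1) * t ^ k) atTop (𝓝 0) := by
    have := h2.add h3
    simpa [add_mul, one_mul] using this
  have hcomp := hg.comp (tendsto_sub_atTop_nat 1)
  apply hcomp.congr'
  filter_upwards [eventually_ge_atTop 1] with m hm
  simp only [Function.comp_apply]
  have : ((m - 1 : ℕ) : ℝ) = (m : ℝ) - 1 := by
    rw [Nat.cast_sub hm]; simp
  rw [this]
  ring_nf


/-- **Corollary (Lebesgue values via ISIMIN nearest neighbors).**
Setting: `X 0, X 1, …` i.i.d. with common distribution `μ`, `x` in the support of `μ`,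
`η` bounded measurable, `(ψ m, Θ m)` an ISIMIN, `NN m` the nearest neighbor of `x`
among `X 0, …, X (m-1)` according to `(ψ m, Θ m)`, and `l ∈ ℝ`. Then `l` is the
Lebesgue value of `η` at `x` with respect to `μ` iff `𝔼[|η(NN m) − l|] → 0` as
`m → ∞`. -/
theorem stmt_15
    {𝒳 Ω : Type*} [MetricSpace 𝒳] [MeasurableSpace 𝒳] [BorelSpace 𝒳]
    {mΩ : MeasurableSpace Ω} (P : Measure Ω) [IsProbabilityMeasure P]
    (X : ℕ → Ω → 𝒳) (μ : Measure 𝒳)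
    (hXmeas : ∀ i, Measurable (X i))
    (hXindep : ProbabilityTheory.iIndepFun (m := fun _ => (inferInstance : MeasurableSpace 𝒳)) X P)
    (hXdist : ∀ i, P.map (X i) = μ)
    (x : 𝒳) (hsupp : ∀ r > (0 : ℝ), 0 < μ (Metric.closedBall x r))
    (η : 𝒳 → ℝ) (hηmeas : Measurable η) (C : ℝ) (hηbdd : ∀ y, |η y| ≤ C)
    (𝒵 : ℕ → Type*) [∀ m, MeasurableSpace (𝒵 m)]
    (Θ : ∀ m : ℕ, Ω → 𝒵 m) (hΘmeas : ∀ m, Measurable (Θ m))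
    (hΘindep : ∀ m : ℕ,
      ProbabilityTheory.IndepFun (Θ m) (fun ω => fun i : Fin m => X (i : ℕ) ω) P)
    (ψ : ∀ m : ℕ, ((ℕ → ℝ) × 𝒵 m) → ℕ)
    (hψmeas : ∀ m, Measurable (ψ m))
    (hψdep : ∀ m : ℕ, ∀ f g : ℕ → ℝ, ∀ z : 𝒵 m,
      (∀ i < m, f i = g i) → ψ m (f, z) = ψ m (g, z))
    (hψmin : ∀ m : ℕ, 1 ≤ m → ∀ (f : ℕ → ℝ) (z : 𝒵 m), (∀ i, 0 ≤ f i) →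
      ψ m (f, z) < m ∧ ∀ j < m, f (ψ m (f, z)) ≤ f j)
    (NN : ℕ → Ω → 𝒳)
    (hNNdef : ∀ (m : ℕ) (ω : Ω),
      NN m ω = X (ψ m (fun i => dist x (X i ω), Θ m ω)) ω)
    (l : ℝ) :
    (Tendsto
      (fun r : ℝ =>
        (∫ y in Metric.closedBall x r, |η y - l| ∂μ) /
          (μ (Metric.closedBall x r)).toReal)
      (𝓝[>] 0) (𝓝 0)) ↔
    Tendsto (fun m : ℕ => ∫ ω, |η (NN m ω) - l| ∂P) atTop (𝓝 0) := by
  classical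
  haveI : IsProbabilityMeasure μ := by
    rw [← hXdist 0]; exact Measure.isProbabilityMeasure_map (hXmeas 0).aemeasurable
  have hdm : Measurable fun y : 𝒳 => dist x y := (continuous_const.dist continuous_id).measurable
  set φ : 𝒳 → ℝ≥0∞ := fun y => ENNReal.ofReal |η y - l| with hφ
  have hφmeas : Measurable φ := ENNReal.measurable_ofReal.comp (hηmeas.sub measurable_const).abs
  set B : ℝ≥0∞ := ENNReal.ofReal (C + |l|) with hB
  have hBne : B ≠ ∞ := ENNReal.ofReal_ne_top
  have hφbd : ∀ y, φ y ≤ B := by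
    intro y
    apply ENNReal.ofReal_le_ofReal
    calc |η y - l| ≤ |η y| + |l| := abs_sub _ _
      _ ≤ C + |l| := add_le_add_left (hηbdd y) _
  set Λ : Measure 𝒳 := μ.withDensity φ with hΛ
  haveI : IsFiniteMeasure Λ := by
    constructor
    rw [hΛ, withDensity_apply _ MeasurableSet.univ, Measure.restrict_univ]
    calc ∫⁻ y, φ y ∂μ ≤ ∫⁻ _y, B ∂μ := lintegral_mono hφbd
      _ = B := by simp
      _ < ∞ := hBne.lt_top
  -- nearest neighbors are measurable
  have hNNmeas : ∀ m, Measurable (NN m) := by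
    intro m
    have hidxmeas : Measurable fun ω => ψ m (fun i => dist x (X i ω), Θ m ω) :=
      (hψmeas m).comp ((measurable_pi_lambda _ fun i => hdm.comp (hXmeas i)).prodMk (hΘmeas m))
    have heq : NN m = (fun p : Ω × ℕ => X p.2 p.1) ∘ fun ω =>
        (ω, ψ m (fun i => dist x (X i ω), Θ m ω)) := by
      funext ω; simp [hNNdef m ω]
    rw [heq]
    exact (measurable_from_prod_countable_left fun j => hXmeas j).comp
      (measurable_id.prodMk hidxmeas)
  set L : ℕ → ℝ≥0∞ := fun m => ∫⁻ ω, φ (NN m ω) ∂P with hL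
  have hLB : ∀ m, L m ≤ B := by
    intro m
    calc L m ≤ ∫⁻ _ω, B ∂P := lintegral_mono fun ω => hφbd _
      _ = B := by simp
  have hLne : ∀ m, L m ≠ ∞ := fun m => ((hLB m).trans_lt hBne.lt_top).ne
  -- rewrite the two sides
  have hint : ∀ m, ∫ ω, |η (NN m ω) - l| ∂P = (L m).toReal := by
    intro m
    rw [hL]
    exact integral_eq_lintegral_of_nonneg_ae (Filter.Eventually.of_forall fun ω => abs_nonneg _)
      ((hηmeas.comp (hNNmeas m)).sub measurable_const).abs.aestronglyMeasurable
  have hA : ∀ r : ℝ, ∫ y in Metric.closedBall x r, |η y - l| ∂μ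
      = (Λ (Metric.closedBall x r)).toReal := by
    intro r
    rw [hΛ, withDensity_apply _ Metric.isClosed_closedBall.measurableSet]
    exact integral_eq_lintegral_of_nonneg_ae (Filter.Eventually.of_forall fun y => abs_nonneg _)
      ((hηmeas.sub measurable_const).abs.aestronglyMeasurable)
  rw [show (fun r : ℝ => (∫ y in Metric.closedBall x r, |η y - l| ∂μ) /
      (μ (Metric.closedBall x r)).toReal)
      = fun r => (Λ (Metric.closedBall x r)).toReal / (μ (Metric.closedBall x r)).toReal from
    funext fun r => by rw [hA r]]
  rw [show (fun m : ℕ => ∫ ω, |η (NN m ω) - l| ∂P) = fun m => (L m).toReal from funext hint]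
  -- the kernels Q m
  have hQex : ∀ m : ℕ, ∃ Qm : ℝ → ℝ≥0∞, Measurable Qm ∧ (1 ≤ m →
      ((∀ r : ℝ, 0 ≤ r → (m : ℝ≥0∞) * μ {y | r < dist x y} ^ (m - 1) ≤ Qm r ∧
          Qm r ≤ (m : ℝ≥0∞) * μ {y | r ≤ dist x y} ^ (m - 1)) ∧
        (∀ f : 𝒳 → ℝ≥0∞, Measurable f →
          ∫⁻ ω, f (NN m ω) ∂P = ∫⁻ y, f y * Qm (dist x y) ∂μ))) := by
    intro m
    rcases Nat.lt_or_ge m 1 with hm | hm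
    · exact ⟨fun _ => 0, measurable_const, fun h => absurd h (by omega)⟩
    · obtain ⟨Qm, h1, h2, h3⟩ := master_identity P X μ hXmeas hXindep hXdist x (hΘmeas m) hm
        (hΘindep m) (hψmeas m) (hψdep m) (hψmin m hm)
      refine ⟨Qm, h1, fun _ => ⟨h2, ?_⟩⟩
      intro f hf
      rw [show (fun ω => f (NN m ω))
          = fun ω => f (X (ψ m (fun i => dist x (X i ω), Θ m ω)) ω) from
        funext fun ω => by rw [hNNdef m ω]]
      exact h3 f hf
  choose Q hQmeas hQprop using hQex
  have hQanti : ∀ m : ℕ, 1 ≤ m → Antitone fun r => Q m (max r 0) := by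
    intro m hm r1 r2 h12
    simp only
    set s1 := max r1 0 with hs1d
    set s2 := max r2 0 with hs2d
    have hs1 : 0 ≤ s1 := le_max_right _ _
    have hs2 : 0 ≤ s2 := le_max_right _ _
    have hs12 : s1 ≤ s2 := max_le_max h12 le_rfl
    rcases eq_or_lt_of_le hs12 with he | hlt
    · rw [he]
    · calc Q m s2 ≤ (m : ℝ≥0∞) * μ {y | s2 ≤ dist x y} ^ (m - 1) :=
          ((hQprop m hm).1 s2 hs2).2
        _ ≤ (m : ℝ≥0∞) * μ {y | s1 < dist x y} ^ (m - 1) := by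
          apply mul_le_mul_right
          apply pow_le_pow_left' (measure_mono ?_)
          intro y hy
          exact lt_of_lt_of_le hlt hy
        _ ≤ Q m s1 := ((hQprop m hm).1 s1 hs1).1
  have hQint : ∀ m : ℕ, 1 ≤ m → ∫⁻ y, Q m (dist x y) ∂μ = 1 := by
    intro m hm
    have h1 := (hQprop m hm).2 (fun _ => 1) measurable_const
    simp only [one_mul] at h1
    rw [← h1, lintegral_one, measure_univ]
  have hLm : ∀ m : ℕ, 1 ≤ m → L m = ∫⁻ y, φ y * Q m (dist x y) ∂μ := fun m hm =>
    (hQprop m hm).2 φ hφmeas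
  have hcompl : ∀ r : ℝ, {y : 𝒳 | r < dist x y} = (Metric.closedBall x r)ᶜ := by
    intro r
    ext y
    simp [Metric.mem_closedBall, dist_comm y x, not_le]
  constructor
  · intro hTend
    have hmain : Tendsto L atTop (𝓝 0) := by
      rw [ENNReal.tendsto_nhds_zero]
      intro ε hε
      have hεne : min ε 1 ≠ ∞ := ne_top_of_le_ne_top (by simp) (min_le_right _ _)
      set e : ℝ := (min ε 1).toReal / 2 with he_def
      have hmin0 : 0 < min ε 1 := lt_min hε zero_lt_one
      have he : 0 < e := div_pos (ENNReal.toReal_pos hmin0.ne' hεne) two_pos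
      have hsum : ENNReal.ofReal e + ENNReal.ofReal e ≤ ε := by
        rw [← ENNReal.ofReal_add he.le he.le]
        have h2 : e + e = (min ε 1).toReal := by rw [he_def]; ring
        rw [h2, ENNReal.ofReal_toReal hεne]
        exact min_le_left _ _
      obtain ⟨δ, hδpos, hδ⟩ := (Metric.tendsto_nhdsWithin_nhds).mp hTend e he
      set δ' : ℝ := δ / 2 with hδ'_def
      have hδ'pos : 0 < δ' := by positivity
      have hball : ∀ r : ℝ, 0 < r → r ≤ δ' →
          Λ (Metric.closedBall x r) ≤ ENNReal.ofReal e * μ (Metric.closedBall x r) := by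
        intro r hr hrδ
        have h1 := hδ (Set.mem_Ioi.mpr hr) (by
          rw [Real.dist_eq, sub_zero, abs_of_pos hr]
          rw [hδ'_def] at hrδ
          linarith)
        rw [Real.dist_eq, sub_zero,
          abs_of_nonneg (div_nonneg ENNReal.toReal_nonneg ENNReal.toReal_nonneg)] at h1
        have hFpos : 0 < (μ (Metric.closedBall x r)).toReal :=
          ENNReal.toReal_pos (hsupp r hr).ne' (measure_ne_top μ _)
        rw [div_lt_iff₀ hFpos] at h1
        calc Λ (Metric.closedBall x r)
            = ENNReal.ofReal ((Λ (Metric.closedBall x r)).toReal) :=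
              (ENNReal.ofReal_toReal (measure_ne_top Λ _)).symm
          _ ≤ ENNReal.ofReal (e * (μ (Metric.closedBall x r)).toReal) :=
              ENNReal.ofReal_le_ofReal h1.le
          _ = ENNReal.ofReal e * ENNReal.ofReal ((μ (Metric.closedBall x r)).toReal) :=
              ENNReal.ofReal_mul he.le
          _ = ENNReal.ofReal e * μ (Metric.closedBall x r) := by
              rw [ENNReal.ofReal_toReal (measure_ne_top μ _)]
      have hball0 : Λ (Metric.closedBall x 0) ≤ ENNReal.ofReal e * μ (Metric.closedBall x 0) := by
        have hΛt := tendsto_shrinking_balls Λ x δ' hδ'pos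
        have hμt : Tendsto (fun n : ℕ => ENNReal.ofReal e * μ (Metric.closedBall x (δ' / (n + 1))))
            atTop (𝓝 (ENNReal.ofReal e * μ (Metric.closedBall x 0))) :=
          ENNReal.Tendsto.const_mul (tendsto_shrinking_balls μ x δ' hδ'pos)
            (Or.inr ENNReal.ofReal_ne_top)
        apply le_of_tendsto_of_tendsto' hΛt hμt
        intro n
        apply hball _ (by positivity)
        rw [div_le_iff₀ (by positivity : (0:ℝ) < (n:ℝ) + 1)]
        nlinarith [Nat.cast_nonneg (α := ℝ) n, hδ'pos]
      have hIcc : ∀ r ∈ Set.Icc (0:ℝ) δ',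
          Λ (Metric.closedBall x r) ≤ ENNReal.ofReal e * μ (Metric.closedBall x r) := by
        rintro r ⟨hr0, hrδ⟩
        rcases eq_or_lt_of_le hr0 with he0 | hpos
        · rw [← he0]; exact hball0
        · exact hball r hpos hrδ
      set a : ℝ≥0∞ := μ {y | δ' < dist x y} with ha_def
      have halt : a < 1 := by
        rw [ha_def, hcompl, prob_compl_eq_one_sub Metric.isClosed_closedBall.measurableSet]
        exact ENNReal.sub_lt_self (by simp) (by simp) (hsupp δ' hδ'pos).ne'
      have hane : a ≠ ∞ := (halt.trans_le le_top).ne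
      set t : ℝ := a.toReal with ht_def
      have ht1 : t < 1 := by
        have := (ENNReal.toReal_lt_toReal hane (by simp : (1:ℝ≥0∞) ≠ ∞)).mpr halt
        simpa using this
      have htendtail : Tendsto (fun m : ℕ => (m : ℝ≥0∞) * a ^ (m - 1)) atTop (𝓝 0) := by
        have hreal := tendsto_mul_pow_zero (ENNReal.toReal_nonneg : 0 ≤ t) ht1
        have h2 := ENNReal.tendsto_ofReal hreal
        rw [ENNReal.ofReal_zero] at h2
        apply h2.congr
        intro m
        rw [ENNReal.ofReal_mul (by positivity), ENNReal.ofReal_natCast,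
          ENNReal.ofReal_pow ENNReal.toReal_nonneg, ENNReal.ofReal_toReal hane]
      have hBev : ∀ᶠ m : ℕ in atTop,
          B * ((m : ℝ≥0∞) * a ^ (m - 1)) ≤ ENNReal.ofReal e := by
        rcases eq_or_ne B 0 with hB0 | hB0
        · filter_upwards with m
          rw [hB0, zero_mul]
          exact zero_le
        · have hpos : 0 < ENNReal.ofReal e / B :=
            ENNReal.div_pos (ENNReal.ofReal_pos.mpr he).ne' hBne
          filter_upwards [ENNReal.tendsto_nhds_zero.mp htendtail _ hpos] with m hm
          calc B * ((m : ℝ≥0∞) * a ^ (m - 1)) ≤ B * (ENNReal.ofReal e / B) :=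
              mul_le_mul_right hm _
            _ ≤ ENNReal.ofReal e := ENNReal.mul_div_le
      filter_upwards [hBev, eventually_ge_atTop 1] with m hBm hm
      have hqextmeas : Measurable fun r : ℝ => Q m (max r 0) :=
        (hQmeas m).comp (measurable_id.max measurable_const)
      have hsplit : L m = (∫⁻ y in Metric.closedBall x δ', φ y * Q m (dist x y) ∂μ)
          + ∫⁻ y in (Metric.closedBall x δ')ᶜ, φ y * Q m (dist x y) ∂μ := by
        rw [hLm m hm, ← lintegral_add_compl _ Metric.isClosed_closedBall.measurableSet]
      have hmeasg : Measurable fun y : 𝒳 => Q m (max (dist x y) 0) := hqextmeas.comp hdm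
      have hhead : ∫⁻ y in Metric.closedBall x δ', φ y * Q m (dist x y) ∂μ
          ≤ ENNReal.ofReal e := by
        have h1 : ∫⁻ y in Metric.closedBall x δ', Q m (max (dist x y) 0) ∂Λ
            = ∫⁻ y in Metric.closedBall x δ', φ y * Q m (dist x y) ∂μ := by
          rw [hΛ, restrict_withDensity Metric.isClosed_closedBall.measurableSet,
            lintegral_withDensity_eq_lintegral_mul _ hφmeas hmeasg]
          apply lintegral_congr
          intro y
          simp [max_eq_left dist_nonneg, Pi.mul_apply]
        rw [← h1]
        calc ∫⁻ y in Metric.closedBall x δ', Q m (max (dist x y) 0) ∂Λ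
            ≤ ENNReal.ofReal e
              * ∫⁻ y in Metric.closedBall x δ', Q m (max (dist x y) 0) ∂μ :=
              abel_lemma μ Λ x δ' (ENNReal.ofReal e) (fun r => Q m (max r 0))
                (hQanti m hm) hqextmeas hIcc
          _ ≤ ENNReal.ofReal e * ∫⁻ y, Q m (max (dist x y) 0) ∂μ :=
              mul_le_mul_right (setLIntegral_le_lintegral _ _) _
          _ = ENNReal.ofReal e * 1 := by
              congr 1
              rw [← hQint m hm]
              apply lintegral_congr
              intro y
              simp [max_eq_left dist_nonneg]
          _ = ENNReal.ofReal e := mul_one _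
      have htail : ∫⁻ y in (Metric.closedBall x δ')ᶜ, φ y * Q m (dist x y) ∂μ
          ≤ B * ((m : ℝ≥0∞) * a ^ (m - 1)) := by
        have hbound : ∀ y ∈ (Metric.closedBall x δ')ᶜ,
            φ y * Q m (dist x y) ≤ B * ((m : ℝ≥0∞) * a ^ (m - 1)) := by
          intro y hy
          have hyδ : δ' < dist x y := by
            simp only [Set.mem_compl_iff, Metric.mem_closedBall, not_le] at hy
            rwa [dist_comm] at hy
          have hQle : Q m (dist x y) ≤ (m : ℝ≥0∞) * a ^ (m - 1) := by
            calc Q m (dist x y)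
                ≤ (m : ℝ≥0∞) * μ {y' | dist x y ≤ dist x y'} ^ (m - 1) :=
                  ((hQprop m hm).1 (dist x y) dist_nonneg).2
              _ ≤ (m : ℝ≥0∞) * a ^ (m - 1) := by
                  apply mul_le_mul_right
                  apply pow_le_pow_left' (measure_mono ?_)
                  intro y' hy'
                  exact lt_of_lt_of_le hyδ hy'
          exact mul_le_mul' (hφbd y) hQle
        calc ∫⁻ y in (Metric.closedBall x δ')ᶜ, φ y * Q m (dist x y) ∂μ
            ≤ ∫⁻ _y in (Metric.closedBall x δ')ᶜ, B * ((m : ℝ≥0∞) * a ^ (m - 1)) ∂μ := by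
              apply lintegral_mono_ae
              rw [ae_restrict_iff' Metric.isClosed_closedBall.measurableSet.compl]
              exact Filter.Eventually.of_forall hbound
          _ = B * ((m : ℝ≥0∞) * a ^ (m - 1)) * μ ((Metric.closedBall x δ')ᶜ) :=
              setLIntegral_const _ _
          _ ≤ B * ((m : ℝ≥0∞) * a ^ (m - 1)) * 1 := mul_le_mul_right prob_le_one _
          _ = B * ((m : ℝ≥0∞) * a ^ (m - 1)) := mul_one _
      calc L m ≤ ENNReal.ofReal e + B * ((m : ℝ≥0∞) * a ^ (m - 1)) := by
            rw [hsplit]; exact add_le_add hhead htail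
        _ ≤ ENNReal.ofReal e + ENNReal.ofReal e := add_le_add_right hBm _
        _ ≤ ε := hsum
    have h2 := (ENNReal.tendsto_toReal (by simp : (0:ℝ≥0∞) ≠ ∞)).comp hmain
    simpa [Function.comp_def] using h2
  · intro hTend
    have hLtend : Tendsto L atTop (𝓝 0) := by
      have h1 := ENNReal.tendsto_ofReal hTend
      rw [ENNReal.ofReal_zero] at h1
      apply h1.congr
      intro m
      exact ENNReal.ofReal_toReal (hLne m)
    by_contra hno
    rw [Metric.tendsto_nhdsWithin_nhds] at hno
    push_neg at hno
    obtain ⟨ε, hε, hcounter⟩ := hno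
    have hex : ∀ n : ℕ, ∃ r : ℝ, r ∈ Set.Ioi (0:ℝ) ∧ dist r 0 < 1/(n+1) ∧
        ε ≤ dist ((Λ (Metric.closedBall x r)).toReal / (μ (Metric.closedBall x r)).toReal) 0 := by
      intro n
      obtain ⟨r, hr1, hr2, hr3⟩ := hcounter (1/(n+1)) (by positivity)
      exact ⟨r, hr1, hr2, hr3⟩
    choose r hr1 hr2 hr3 using hex
    have hrpos : ∀ n, 0 < r n := fun n => hr1 n
    have hrlt : ∀ n, r n < 1/(n+1) := by
      intro n
      have h2 := hr2 n
      rwa [Real.dist_eq, sub_zero, abs_of_pos (hrpos n)] at h2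
    have hratio : ∀ n, ENNReal.ofReal ε * μ (Metric.closedBall x (r n))
        ≤ Λ (Metric.closedBall x (r n)) := by
      intro n
      have h3 := hr3 n
      rw [Real.dist_eq, sub_zero,
        abs_of_nonneg (div_nonneg ENNReal.toReal_nonneg ENNReal.toReal_nonneg)] at h3
      have hFpos : 0 < (μ (Metric.closedBall x (r n))).toReal :=
        ENNReal.toReal_pos (hsupp _ (hrpos n)).ne' (measure_ne_top μ _)
      rw [le_div_iff₀ hFpos] at h3
      calc ENNReal.ofReal ε * μ (Metric.closedBall x (r n))
          = ENNReal.ofReal (ε * (μ (Metric.closedBall x (r n))).toReal) := by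
            rw [ENNReal.ofReal_mul hε.le, ENNReal.ofReal_toReal (measure_ne_top μ _)]
        _ ≤ ENNReal.ofReal ((Λ (Metric.closedBall x (r n))).toReal) :=
            ENNReal.ofReal_le_ofReal h3
        _ = Λ (Metric.closedBall x (r n)) := ENNReal.ofReal_toReal (measure_ne_top Λ _)
    set p : ℝ≥0∞ := μ (Metric.closedBall x 0) with hp_def
    rcases eq_or_ne p 0 with hp0 | hp0
    · -- no atom at x : use the scaling argument
      set F : ℕ → ℝ≥0∞ := fun n => μ (Metric.closedBall x (r n)) with hF
      have hFpos : ∀ n, 0 < F n := fun n => hsupp _ (hrpos n)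
      have hFne : ∀ n, F n ≠ ∞ := fun n => measure_ne_top μ _
      set t : ℕ → ℝ := fun n => (F n).toReal with ht
      have htpos : ∀ n, 0 < t n := fun n => ENNReal.toReal_pos (hFpos n).ne' (hFne n)
      have htto : Tendsto t atTop (𝓝 0) := by
        have hub : ∀ n : ℕ, t n ≤ (μ (Metric.closedBall x (1 / (n + 1)))).toReal := by
          intro n
          exact (ENNReal.toReal_le_toReal (hFne n) (measure_ne_top μ _)).mpr
            (measure_mono (Metric.closedBall_subset_closedBall (hrlt n).le))
        have hlim : Tendsto (fun n : ℕ => (μ (Metric.closedBall x (1 / (n + 1)))).toReal)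
            atTop (𝓝 0) := by
          have h1 := tendsto_shrinking_balls μ x 1 one_pos
          rw [← hp_def, hp0] at h1
          have h2 := (ENNReal.tendsto_toReal (by simp : (0:ℝ≥0∞) ≠ ∞)).comp h1
          simpa [Function.comp_def] using h2
        exact squeeze_zero (fun n => (htpos n).le) hub hlim
      set M : ℕ → ℕ := fun n => ⌊1 / (2 * t n)⌋₊ with hM
      have hMto : Tendsto M atTop atTop := by
        apply tendsto_nat_floor_atTop.comp
        have h2t : Tendsto (fun n => 2 * t n) atTop (𝓝[>] 0) := by
          rw [tendsto_nhdsWithin_iff]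
          constructor
          · have := htto.const_mul (2:ℝ)
            simpa using this
          · filter_upwards with n
            have := htpos n
            simp only [Set.mem_Ioi]
            linarith
        have hinv := tendsto_inv_nhdsGT_zero.comp h2t
        apply hinv.congr
        intro n
        simp [one_div]
      have hLlow : ∀ n, 1 ≤ M n →
          ((M n : ℝ≥0∞) * μ {y | r n < dist x y} ^ (M n - 1)) * (ENNReal.ofReal ε * F n)
            ≤ L (M n) := by
        intro n hm
        set m := M n with hm_def
        set c : ℝ≥0∞ := (m : ℝ≥0∞) * μ {y | r n < dist x y} ^ (m - 1) with hc
        calc c * (ENNReal.ofReal ε * F n) ≤ c * Λ (Metric.closedBall x (r n)) :=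
            mul_le_mul_right (hratio n) _
          _ = ∫⁻ y in Metric.closedBall x (r n), c * φ y ∂μ := by
              rw [hΛ, withDensity_apply _ Metric.isClosed_closedBall.measurableSet,
                lintegral_const_mul c hφmeas]
          _ ≤ ∫⁻ y in Metric.closedBall x (r n), φ y * Q m (dist x y) ∂μ := by
              apply lintegral_mono_ae
              rw [ae_restrict_iff' Metric.isClosed_closedBall.measurableSet]
              apply Filter.Eventually.of_forall
              intro y hy
              rw [mul_comm]
              apply mul_le_mul_right
              have hyr : dist x y ≤ r n := by
                rw [dist_comm]
                exact Metric.mem_closedBall.mp hy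
              calc c ≤ (m : ℝ≥0∞) * μ {y' | dist x y < dist x y'} ^ (m - 1) := by
                    rw [hc]
                    apply mul_le_mul_right
                    apply pow_le_pow_left' (measure_mono ?_)
                    intro y' hy'
                    exact lt_of_le_of_lt hyr hy'
                _ ≤ Q m (dist x y) := ((hQprop m hm).1 (dist x y) dist_nonneg).1
          _ ≤ ∫⁻ y, φ y * Q m (dist x y) ∂μ := setLIntegral_le_lintegral _ _
          _ = L m := (hLm m hm).symm
      have hfinal : ∀ᶠ n : ℕ in atTop, ENNReal.ofReal (ε/8) ≤ L (M n) := by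
        filter_upwards [htto.eventually (gt_mem_nhds (by norm_num : (0:ℝ) < 1/4))] with n hn4
        have h2tle : 2 * t n ≤ 1 := by
          have := htpos n
          linarith
        have hm1 : 1 ≤ M n := by
          rw [hM]
          apply Nat.le_floor
          rw [Nat.cast_one, le_div_iff₀ (by linarith [htpos n] : (0:ℝ) < 2 * t n), one_mul]
          exact h2tle
        have hk1 : (M n : ℝ) ≤ 1 / (2 * t n) := Nat.floor_le (by positivity)
        have hk2 : 1 / (2 * t n) - 1 < (M n : ℝ) := Nat.sub_one_lt_floor _
        have hMt : 1/4 ≤ (M n : ℝ) * t n := by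
          have h1 : (1 / (2 * t n) - 1) * t n < (M n : ℝ) * t n :=
            mul_lt_mul_of_pos_right hk2 (htpos n)
          have h2 : (1 / (2 * t n)) * t n = 1/2 := by
            rw [mul_comm, mul_one_div, div_eq_iff (ne_of_gt (by linarith [htpos n] : (0:ℝ) < 2 * t n))]
            ring
          have h3 : (1 / (2 * t n) - 1) * t n = 1/2 - t n := by
            rw [sub_mul, h2, one_mul]
          rw [h3] at h1
          linarith
        have hkm1 : ((M n - 1 : ℕ) : ℝ) * t n ≤ 1/2 := by
          have h1 : ((M n - 1 : ℕ) : ℝ) ≤ (M n : ℝ) := by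
            exact_mod_cast Nat.sub_le _ _
          have h2 : (M n : ℝ) * t n ≤ 1/2 := by
            calc (M n : ℝ) * t n ≤ (1 / (2 * t n)) * t n :=
                mul_le_mul_of_nonneg_right hk1 (htpos n).le
              _ = 1/2 := by
                  rw [mul_comm, mul_one_div,
                    div_eq_iff (ne_of_gt (by linarith [htpos n] : (0:ℝ) < 2 * t n))]
                  ring
          calc ((M n - 1 : ℕ) : ℝ) * t n ≤ (M n : ℝ) * t n :=
              mul_le_mul_of_nonneg_right h1 (htpos n).le
            _ ≤ 1/2 := h2
        have hBern : (1:ℝ)/2 ≤ (1 - t n) ^ (M n - 1) := by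
          have h := one_add_mul_le_pow (by linarith [htpos n] : (-2:ℝ) ≤ -(t n)) (M n - 1)
          have h2 : 1 + ((M n - 1 : ℕ) : ℝ) * (-(t n)) = 1 - ((M n - 1 : ℕ) : ℝ) * t n := by
            ring
          have h3 : (1 + -(t n)) = 1 - t n := by ring
          rw [h2, h3] at h
          linarith
        have hFn : F n = ENNReal.ofReal (t n) := (ENNReal.ofReal_toReal (hFne n)).symm
        have hbn : μ {y | r n < dist x y} = ENNReal.ofReal (1 - t n) := by
          rw [hcompl, prob_compl_eq_one_sub Metric.isClosed_closedBall.measurableSet,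
            ENNReal.ofReal_sub 1 (htpos n).le, ENNReal.ofReal_one]
          congr 1
        have h1tn : (0:ℝ) ≤ 1 - t n := by linarith
        have hchain2 : ENNReal.ofReal (ε/8)
            ≤ ((M n : ℝ≥0∞) * μ {y | r n < dist x y} ^ (M n - 1)) * (ENNReal.ofReal ε * F n) := by
          rw [hbn, hFn, ← ENNReal.ofReal_natCast (M n),
            ← ENNReal.ofReal_pow h1tn, ← ENNReal.ofReal_mul (Nat.cast_nonneg _),
            ← ENNReal.ofReal_mul hε.le,
            ← ENNReal.ofReal_mul (by positivity : (0:ℝ) ≤ (M n : ℝ) * (1 - t n) ^ (M n - 1))]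
          apply ENNReal.ofReal_le_ofReal
          have hp1 : (0:ℝ) ≤ (1 - t n) ^ (M n - 1) := pow_nonneg h1tn _
          calc ε/8 = (1/4) * (1/2) * ε := by ring
            _ ≤ ((M n : ℝ) * t n) * ((1 - t n) ^ (M n - 1)) * ε := by
                apply mul_le_mul_of_nonneg_right _ hε.le
                apply mul_le_mul hMt hBern (by norm_num) (by positivity)
            _ = (M n : ℝ) * (1 - t n) ^ (M n - 1) * (ε * t n) := by ring
        exact le_trans hchain2 (hLlow n hm1)
      have hcomp2 : Tendsto (fun n => L (M n)) atTop (𝓝 0) := hLtend.comp hMto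
      have hev := ENNReal.tendsto_nhds_zero.mp hcomp2 (ENNReal.ofReal (ε/16))
        (ENNReal.ofReal_pos.mpr (by positivity))
      obtain ⟨n, hn1, hn2⟩ := (hfinal.and hev).exists
      have hcontra := le_trans hn1 hn2
      rw [ENNReal.ofReal_le_ofReal_iff (by positivity)] at hcontra
      linarith
    · -- atom at x
      have hμshrink := tendsto_shrinking_balls μ x 1 one_pos
      have hΛshrink := tendsto_shrinking_balls Λ x 1 one_pos
      have hchain : ∀ n : ℕ, ENNReal.ofReal ε * p ≤ Λ (Metric.closedBall x (1 / (n+1))) := by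
        intro n
        calc ENNReal.ofReal ε * p ≤ ENNReal.ofReal ε * μ (Metric.closedBall x (r n)) := by
              apply mul_le_mul_right
              rw [hp_def]
              exact measure_mono (Metric.closedBall_subset_closedBall (hrpos n).le)
          _ ≤ Λ (Metric.closedBall x (r n)) := hratio n
          _ ≤ Λ (Metric.closedBall x (1/(n+1))) :=
              measure_mono (Metric.closedBall_subset_closedBall (hrlt n).le)
      have hΛ0 : ENNReal.ofReal ε * p ≤ Λ (Metric.closedBall x 0) :=
        ge_of_tendsto hΛshrink (Filter.Eventually.of_forall hchain)
      have hpx : p = μ {x} := by rw [hp_def, Metric.closedBall_zero]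
      have hΛx : Λ (Metric.closedBall x 0) = φ x * p := by
        rw [hΛ, Metric.closedBall_zero, withDensity_apply _ (measurableSet_singleton x),
          lintegral_singleton, hpx]
      have hφx : ENNReal.ofReal ε ≤ φ x := by
        rw [hΛx] at hΛ0
        exact (ENNReal.mul_le_mul_iff_left hp0 (by rw [hpx]; exact measure_ne_top μ _)).mp hΛ0
      have hq : μ ({x}ᶜ) < 1 := by
        rw [prob_compl_eq_one_sub (measurableSet_singleton x)]
        apply ENNReal.sub_lt_self (by simp) (by simp)
        rw [← hpx]
        exact hp0
      have hLlow : ∀ m : ℕ, 1 ≤ m →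
          ENNReal.ofReal ε * (1 - μ ({x}ᶜ) ^ m) ≤ L m := by
        intro m hm
        set Em : Set Ω := ⋂ i ∈ Finset.range m, X i ⁻¹' ({x}ᶜ) with hEm
        have hEmmeas : MeasurableSet Em := by
          apply MeasurableSet.biInter (Finset.range m).countable_toSet
          intro i _
          exact (hXmeas i) (measurableSet_singleton x).compl
        have hPEm : P Em = μ ({x}ᶜ) ^ m := by
          rw [hEm, prob_iInter_pow P X μ hXmeas hXindep hXdist _ (measurableSet_singleton x).compl,
            Finset.card_range]
        have hNNx : ∀ ω ∈ Emᶜ, NN m ω = x := by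
          intro ω hω
          simp only [hEm, Set.mem_compl_iff, Set.mem_iInter, not_forall] at hω
          obtain ⟨i, him, hXix⟩ := hω
          simp only [Set.mem_preimage, Set.mem_compl_iff, Set.mem_singleton_iff, not_not] at hXix
          obtain ⟨hlt, hmin⟩ := hψmin m hm (fun j => dist x (X j ω)) (Θ m ω) (fun j => dist_nonneg)
          have hle := hmin i (Finset.mem_range.mp him)
          have hdist0 : dist x (X i ω) = 0 := by rw [hXix, dist_self]
          rw [hdist0] at hle
          have h0 : dist x (X (ψ m (fun j => dist x (X j ω), Θ m ω)) ω) = 0 :=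
            le_antisymm hle dist_nonneg
          rw [hNNdef m ω]
          exact (dist_eq_zero.mp h0).symm
        calc ENNReal.ofReal ε * (1 - μ ({x}ᶜ) ^ m)
            ≤ φ x * P (Emᶜ) := by
              apply mul_le_mul' hφx
              rw [prob_compl_eq_one_sub hEmmeas, hPEm]
          _ = ∫⁻ _ω in Emᶜ, φ x ∂P := (setLIntegral_const _ _).symm
          _ = ∫⁻ ω in Emᶜ, φ (NN m ω) ∂P := by
              apply setLIntegral_congr_fun hEmmeas.compl
              intro ω hω
              show φ x = φ (NN m ω)
              rw [hNNx ω hω]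
          _ ≤ L m := setLIntegral_le_lintegral _ _
      have hpow : Tendsto (fun m : ℕ => μ ({x}ᶜ) ^ m) atTop (𝓝 0) :=
        ENNReal.tendsto_pow_atTop_nhds_zero_of_lt_one hq
      have hhalf : ∀ᶠ m : ℕ in atTop, μ ({x}ᶜ) ^ m ≤ ENNReal.ofReal (1/2) :=
        ENNReal.tendsto_nhds_zero.mp hpow _ (ENNReal.ofReal_pos.mpr (by norm_num))
      have hev := ENNReal.tendsto_nhds_zero.mp hLtend (ENNReal.ofReal (ε * (1/4)))
        (ENNReal.ofReal_pos.mpr (by positivity))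
      obtain ⟨m, hm1, hm2, hm3⟩ := ((eventually_ge_atTop 1).and (hhalf.and hev)).exists
      have hlow := hLlow m hm1
      have hhalf2 : ENNReal.ofReal (1/2) ≤ 1 - μ ({x}ᶜ) ^ m := by
        have h1 : (1:ℝ≥0∞) - ENNReal.ofReal (1/2) ≤ 1 - μ ({x}ᶜ) ^ m :=
          tsub_le_tsub_left hm2 1
        have h2 : (1:ℝ≥0∞) - ENNReal.ofReal (1/2) = ENNReal.ofReal (1/2) := by
          rw [← ENNReal.ofReal_one, ← ENNReal.ofReal_sub _ (by norm_num : (0:ℝ) ≤ 1/2)]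
          norm_num
        rwa [h2] at h1
      have hfin : ENNReal.ofReal (ε * (1/2)) ≤ L m := by
        calc ENNReal.ofReal (ε * (1/2)) = ENNReal.ofReal ε * ENNReal.ofReal (1/2) :=
            ENNReal.ofReal_mul hε.le
          _ ≤ ENNReal.ofReal ε * (1 - μ ({x}ᶜ) ^ m) := mul_le_mul_right hhalf2 _
          _ ≤ L m := hlow
      have hcontra := le_trans hfin hm3
      rw [ENNReal.ofReal_le_ofReal_iff (by positivity)] at hcontra
      linarith
end

section
/- Let (Ω, ℱ, ℙ) be a probability space, (𝒱, ℱ_𝒱) and (𝒲, ℱ_𝒲) measurable spaces, and let U : Ω → [0,∞], f : 𝒱 × 𝒲 → [0,∞], V : Ω → 𝒱, W : Ω → 𝒲 be measurable. If the pair (U, V) is independent of W under ℙ, then 𝔼[U·f(V, W) ∣ V] = 𝔼[U ∣ V] · 𝔼[f(V, W) ∣ V] ℙ-almost surely. -/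
open MeasureTheory Filter Topology ENNReal


lemma aux_weighted {Ω : Type*} {m mΩ : MeasurableSpace Ω} (hm : m ≤ mΩ)
    (μ : Measure Ω) (g u : Ω → ℝ≥0∞) (hg : Measurable[m] g) (hu : Measurable u)
    (hint : ∀ s : Set Ω, MeasurableSet[m] s →
      ∫⁻ ω in s, g ω ∂μ = ∫⁻ ω in s, u ω ∂μ)
    (h : Ω → ℝ≥0∞) (hh : Measurable[m] h) :
    ∫⁻ ω, h ω * g ω ∂μ = ∫⁻ ω, h ω * u ω ∂μ := by
  have hg' : Measurable g := hg.mono hm le_rfl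
  refine @Measurable.ennreal_induction Ω m
    (fun h => ∫⁻ ω, h ω * g ω ∂μ = ∫⁻ ω, h ω * u ω ∂μ) ?_ ?_ ?_ h hh
  · intro c s hs
    have hind : ∀ (k : Ω → ℝ≥0∞),
        (fun ω => s.indicator (fun _ => c) ω * k ω) = s.indicator (fun ω => c * k ω) := by
      intro k; funext ω; by_cases hω : ω ∈ s <;> simp [Set.indicator, hω]
    rw [hind, hind, lintegral_indicator (hm s hs), lintegral_indicator (hm s hs),
      lintegral_const_mul c hg', lintegral_const_mul c hu,
      hint s hs]
  · intro f₁ f₂ _ hf₁ hf₂ h₁ h₂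
    have e : ∀ (k : Ω → ℝ≥0∞), (fun ω => (f₁ ω + f₂ ω) * k ω)
        = fun ω => f₁ ω * k ω + f₂ ω * k ω := by
      intro k; funext ω; ring
    simp only [Pi.add_apply]
    rw [e, e, lintegral_add_left (f := fun ω => f₁ ω * g ω) ((hf₁.mono hm le_rfl).mul hg'),
      lintegral_add_left (f := fun ω => f₁ ω * u ω) ((hf₁.mono hm le_rfl).mul hu), h₁, h₂]
  · intro f hfm hmono hP
    have e : ∀ (k : Ω → ℝ≥0∞), (fun ω => (⨆ n, f n ω) * k ω)
        = fun ω => ⨆ n, f n ω * k ω := by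
      intro k; funext ω; rw [ENNReal.iSup_mul]
    rw [e, e, lintegral_iSup (f := fun n ω => f n ω * g ω) (fun n => (hfm n).mono hm le_rfl |>.mul hg')
        (fun i j hij ω => mul_le_mul_left (hmono hij ω) _),
      lintegral_iSup (f := fun n ω => f n ω * u ω) (fun n => (hfm n).mono hm le_rfl |>.mul hu)
        (fun i j hij ω => mul_le_mul_left (hmono hij ω) _)]
    exact iSup_congr hP

lemma aux_unique {Ω : Type*} {m mΩ : MeasurableSpace Ω} (hm : m ≤ mΩ)
    (μ : Measure Ω) [IsFiniteMeasure μ] (a b : Ω → ℝ≥0∞)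
    (ha : Measurable[m] a) (hb : Measurable[m] b)
    (h : ∀ s : Set Ω, MeasurableSet[m] s →
      ∫⁻ ω in s, a ω ∂μ = ∫⁻ ω in s, b ω ∂μ) : a =ᵐ[μ] b := by
  have htrim : a =ᵐ[μ.trim hm] b := by
    refine ae_eq_of_forall_setLIntegral_eq_of_sigmaFinite ha hb fun s hs _ => ?_
    rw [restrict_trim hm μ hs, lintegral_trim hm ha, lintegral_trim hm hb]
    exact h s hs
  exact ae_eq_of_ae_eq_trim htrim

lemma aux_key {Ω 𝒱 𝒲 : Type*} {mΩ : MeasurableSpace Ω} {m𝒱 : MeasurableSpace 𝒱}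
    {m𝒲 : MeasurableSpace 𝒲}
    (P : Measure Ω) [IsProbabilityMeasure P]
    (U : Ω → ℝ≥0∞) (f : 𝒱 × 𝒲 → ℝ≥0∞) (V : Ω → 𝒱) (W : Ω → 𝒲)
    (hU : Measurable U) (hf : Measurable f) (hV : Measurable V) (hW : Measurable W)
    (hindep : ProbabilityTheory.IndepFun (fun ω => (U ω, V ω)) W P)
    {A : Set 𝒱} (hA : MeasurableSet A) :
    ∫⁻ ω in V ⁻¹' A, U ω * f (V ω, W ω) ∂P
      = ∫⁻ ω in V ⁻¹' A, U ω * (∫⁻ w, f (V ω, w) ∂(P.map W)) ∂P := by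
  set ν := P.map W with hν
  have hνP : IsProbabilityMeasure ν := Measure.isProbabilityMeasure_map hW.aemeasurable
  have hprod := (ProbabilityTheory.indepFun_iff_map_prod_eq_prod_map_map
    (hU.prodMk hV).aemeasurable hW.aemeasurable).mp hindep
  have hF : Measurable fun v => ∫⁻ w, f (v, w) ∂ν := hf.lintegral_prod_right'
  set G : (ℝ≥0∞ × 𝒱) × 𝒲 → ℝ≥0∞ :=
    fun p => A.indicator (fun _ => (1:ℝ≥0∞)) p.1.2 * (p.1.1 * f (p.1.2, p.2)) with hGdef
  have hG : Measurable G :=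
    ((measurable_const.indicator hA).comp (measurable_snd.comp measurable_fst)).mul
      ((measurable_fst.comp measurable_fst).mul
        (hf.comp ((measurable_snd.comp measurable_fst).prodMk measurable_snd)))
  have hind : ∀ (k : Ω → ℝ≥0∞), (V ⁻¹' A).indicator k
      = fun ω => A.indicator (fun _ => (1:ℝ≥0∞)) (V ω) * k ω := by
    intro k; funext ω; by_cases hω : V ω ∈ A <;> simp [Set.indicator, hω]
  calc ∫⁻ ω in V ⁻¹' A, U ω * f (V ω, W ω) ∂P
      = ∫⁻ ω, A.indicator (fun _ => (1:ℝ≥0∞)) (V ω) * (U ω * f (V ω, W ω)) ∂P := by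
        rw [← lintegral_indicator (hV hA), hind]
    _ = ∫⁻ p, G p ∂(P.map fun ω => ((U ω, V ω), W ω)) :=
        (lintegral_map hG ((hU.prodMk hV).prodMk hW)).symm
    _ = ∫⁻ p, G p ∂((P.map fun ω => (U ω, V ω)).prod ν) := by rw [hprod]
    _ = ∫⁻ q, ∫⁻ w, G (q, w) ∂ν ∂(P.map fun ω => (U ω, V ω)) :=
        lintegral_prod _ hG.aemeasurable
    _ = ∫⁻ q : ℝ≥0∞ × 𝒱, A.indicator (fun _ => (1:ℝ≥0∞)) q.2
          * (q.1 * ∫⁻ w, f (q.2, w) ∂ν) ∂(P.map fun ω => (U ω, V ω)) := by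
        refine lintegral_congr fun q => ?_
        simp only [hGdef]
        have h1 : Measurable fun w => f (q.2, w) := hf.comp measurable_prodMk_left
        have h2 : Measurable fun w => q.1 * f (q.2, w) := measurable_const.mul h1
        rw [lintegral_const_mul _ h2, lintegral_const_mul _ h1]
    _ = ∫⁻ ω, A.indicator (fun _ => (1:ℝ≥0∞)) (V ω)
          * (U ω * ∫⁻ w, f (V ω, w) ∂ν) ∂P :=
        lintegral_map (((measurable_const.indicator hA).comp measurable_snd).mul
          (measurable_fst.mul (hF.comp measurable_snd))) (hU.prodMk hV)
    _ = ∫⁻ ω in V ⁻¹' A, U ω * (∫⁻ w, f (V ω, w) ∂ν) ∂P := by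
        rw [← lintegral_indicator (hV hA), hind]


/-- **Lemma (conditional independence factorization).**
Let `(Ω, ℱ, ℙ)` be a probability space, `(𝒱, ℱ_𝒱)`, `(𝒲, ℱ_𝒲)` measurable spaces, and
`U : Ω → [0,∞]`, `f : 𝒱 × 𝒲 → [0,∞]`, `V : Ω → 𝒱`, `W : Ω → 𝒲` measurable. If the pair
`(U, V)` is independent of `W`, then `𝔼[U·f(V,W) ∣ V] = 𝔼[U ∣ V]·𝔼[f(V,W) ∣ V]`
ℙ-almost surely. Since the functions are `[0,∞]`-valued, a conditional expectation of
`H : Ω → [0,∞]` given `V` is formalized as a `σ(V)`-measurable `G : Ω → [0,∞]` with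
`∫⁻_s G dℙ = ∫⁻_s H dℙ` for every `s ∈ σ(V)`; the conclusion states that any such
versions `g₁, g₂, g₃` for `U·f(V,W)`, `U` and `f(V,W)` satisfy `g₁ = g₂·g₃` ℙ-a.s. -/
theorem stmt_19
    {Ω 𝒱 𝒲 : Type*} {mΩ : MeasurableSpace Ω} {m𝒱 : MeasurableSpace 𝒱}
    {m𝒲 : MeasurableSpace 𝒲}
    (P : Measure Ω) [IsProbabilityMeasure P]
    (U : Ω → ℝ≥0∞) (f : 𝒱 × 𝒲 → ℝ≥0∞) (V : Ω → 𝒱) (W : Ω → 𝒲)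
    (hU : Measurable U) (hf : Measurable f) (hV : Measurable V) (hW : Measurable W)
    (hindep : ProbabilityTheory.IndepFun (fun ω => (U ω, V ω)) W P)
    (g₁ g₂ g₃ : Ω → ℝ≥0∞)
    (hg₁ : Measurable[MeasurableSpace.comap V m𝒱] g₁)
    (hg₂ : Measurable[MeasurableSpace.comap V m𝒱] g₂)
    (hg₃ : Measurable[MeasurableSpace.comap V m𝒱] g₃)
    (hg₁int : ∀ s : Set Ω, MeasurableSet[MeasurableSpace.comap V m𝒱] s →
      ∫⁻ ω in s, g₁ ω ∂P = ∫⁻ ω in s, U ω * f (V ω, W ω) ∂P)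
    (hg₂int : ∀ s : Set Ω, MeasurableSet[MeasurableSpace.comap V m𝒱] s →
      ∫⁻ ω in s, g₂ ω ∂P = ∫⁻ ω in s, U ω ∂P)
    (hg₃int : ∀ s : Set Ω, MeasurableSet[MeasurableSpace.comap V m𝒱] s →
      ∫⁻ ω in s, g₃ ω ∂P = ∫⁻ ω in s, f (V ω, W ω) ∂P) :
    g₁ =ᵐ[P] fun ω => g₂ ω * g₃ ω := by
  have hm : MeasurableSpace.comap V m𝒱 ≤ mΩ := hV.comap_le
  set ν := P.map W with hνdef
  have hνP : IsProbabilityMeasure ν := Measure.isProbabilityMeasure_map hW.aemeasurable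
  set F : 𝒱 → ℝ≥0∞ := fun v => ∫⁻ w, f (v, w) ∂ν with hFdef
  have hF : Measurable F := hf.lintegral_prod_right'
  have hVm : Measurable[MeasurableSpace.comap V m𝒱] V := Measurable.of_comap_le le_rfl
  have hFV : Measurable[MeasurableSpace.comap V m𝒱] fun ω => F (V ω) := hF.comp hVm
  -- independence of (1, V) and W
  have hindep1 : ProbabilityTheory.IndepFun (fun ω => ((1:ℝ≥0∞), V ω)) W P := by
    have hφ : Measurable fun p : ℝ≥0∞ × 𝒱 => ((1:ℝ≥0∞), p.2) :=
      measurable_const.prodMk measurable_snd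
    have := hindep.comp hφ (measurable_id (α := 𝒲))
    simpa [Function.comp_def] using this
  -- g₃ is a.e. equal to F ∘ V
  have hg₃eq : g₃ =ᵐ[P] fun ω => F (V ω) := by
    refine aux_unique hm P _ _ hg₃ hFV fun s hs => ?_
    obtain ⟨A, hA, rfl⟩ := hs
    rw [hg₃int _ ⟨A, hA, rfl⟩]
    have := aux_key P (fun _ => (1:ℝ≥0∞)) f V W measurable_const hf hV hW hindep1 hA
    simpa [one_mul] using this
  -- main uniqueness argument
  refine aux_unique hm P _ _ hg₁ (hg₂.mul hg₃) fun s hs => ?_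
  obtain ⟨A, hA, rfl⟩ := hs
  have hsmem : MeasurableSet[MeasurableSpace.comap V m𝒱] (V ⁻¹' A) := ⟨A, hA, rfl⟩
  -- weighted equality: ∫_{V⁻¹A} F(V) * g₂ = ∫_{V⁻¹A} F(V) * U
  have hweight : ∫⁻ ω in V ⁻¹' A, F (V ω) * g₂ ω ∂P
      = ∫⁻ ω in V ⁻¹' A, F (V ω) * U ω ∂P := by
    have hw := aux_weighted hm P g₂ U hg₂ hU hg₂int
      ((V ⁻¹' A).indicator fun ω => F (V ω)) (hFV.indicator hsmem)
    have hind : ∀ (k : Ω → ℝ≥0∞),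
        (fun ω => ((V ⁻¹' A).indicator (fun ω => F (V ω))) ω * k ω)
          = (V ⁻¹' A).indicator (fun ω => F (V ω) * k ω) := by
      intro k; funext ω; by_cases hω : ω ∈ V ⁻¹' A <;> simp [Set.indicator, hω]
    rw [hind, hind, lintegral_indicator (hV hA), lintegral_indicator (hV hA)] at hw
    exact hw
  calc ∫⁻ ω in V ⁻¹' A, g₁ ω ∂P
      = ∫⁻ ω in V ⁻¹' A, U ω * f (V ω, W ω) ∂P := hg₁int _ hsmem
    _ = ∫⁻ ω in V ⁻¹' A, U ω * F (V ω) ∂P :=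
        aux_key P U f V W hU hf hV hW hindep hA
    _ = ∫⁻ ω in V ⁻¹' A, F (V ω) * U ω ∂P := by
        refine lintegral_congr fun ω => mul_comm _ _
    _ = ∫⁻ ω in V ⁻¹' A, F (V ω) * g₂ ω ∂P := hweight.symm
    _ = ∫⁻ ω in V ⁻¹' A, g₂ ω * F (V ω) ∂P := by
        refine lintegral_congr fun ω => mul_comm _ _
    _ = ∫⁻ ω in V ⁻¹' A, g₂ ω * g₃ ω ∂P := by
        refine lintegral_congr_ae ?_
        filter_upwards [ae_restrict_of_ae hg₃eq] with ω hω
        rw [hω]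
end
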